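/- arXiv:1405.7206 — 4 statements merged into one kernel-verified Lean document; each statement's English description precedes it below -/
import Mathlib

section
/- Let n ≥ 1 and let X₁,…,Xₙ be i.i.d. exponential random variables with mean λ > 0. Writing X̄ = (1/n)Σᵢ Xᵢ and S² = Σᵢ (Xᵢ − X̄)², one has E[S⁴] = ((n − 1)(n² + 7n − 6)/n) λ⁴. -/
open MeasureTheory ProbabilityTheory Filter

section Aux
open Real Set
open scoped ENNReal NNReal

private lemma exp_moment' {r : ℝ} (hr : 0 < r) (k : ℕ) :
    Integrable (fun x => x ^ k) (expMeasure r) ∧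
      ∫ x, x ^ k ∂(expMeasure r) = (Nat.factorial k : ℝ) / r ^ k := by
  have hexp : expMeasure r
      = volume.withDensity (fun x => ((exponentialPDFReal r x).toNNReal : ℝ≥0∞)) := by
    rw [expMeasure, gammaMeasure]
    congr 1
  have hmeaspdf : Measurable fun x => (exponentialPDFReal r x).toNNReal :=
    (measurable_exponentialPDFReal r).real_toNNReal
  -- a.e. identification with an indicator function
  have hind : (fun x : ℝ => exponentialPDFReal r x * x ^ k)
      =ᵐ[volume] (Ioi (0:ℝ)).indicator (fun x => x ^ k * (r * rexp (-(r * x)))) := by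
    filter_upwards [compl_mem_ae_iff.2 (volume_singleton (a := (0:ℝ)))] with x hx
    simp only [mem_compl_iff, mem_singleton_iff] at hx
    rcases lt_trichotomy x 0 with h | h | h
    · rw [indicator_of_notMem (by simp [mem_Ioi]; linarith)]
      simp [exponentialPDFReal, gammaPDFReal, not_le.2 h]
    · exact absurd h hx
    · rw [indicator_of_mem (mem_Ioi.2 h)]
      simp only [exponentialPDFReal, gammaPDFReal, if_pos h.le, Real.Gamma_one, sub_self,
        Real.rpow_zero, Real.rpow_one, mul_one, one_mul, div_one]
      ring
  have hIoi : IntegrableOn (fun x => x ^ k * (r * rexp (-(r * x)))) (Ioi 0) volume := by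
    have h0 := integrableOn_rpow_mul_exp_neg_mul_rpow (p := 1) (s := (k:ℝ)) (b := r)
      (lt_of_lt_of_le (by norm_num) (Nat.cast_nonneg k)) one_pos hr
    have h1 : IntegrableOn (fun x : ℝ => x ^ k * rexp (-(r * x))) (Ioi 0) volume := by
      refine h0.congr_fun (fun x hx => ?_) measurableSet_Ioi
      simp only [rpow_one, rpow_natCast, neg_mul]
    simpa [mul_comm, mul_assoc, mul_left_comm] using (show IntegrableOn (fun x : ℝ => x ^ k * rexp (-(r * x)) * r) (Ioi 0) volume from h1.mul_const r)
  have hint : Integrable (fun x => x ^ k) (expMeasure r) := by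
    rw [hexp, integrable_withDensity_iff (by exact_mod_cast hmeaspdf.coe_nnreal_ennreal)
      (Eventually.of_forall fun x => ENNReal.coe_lt_top)]
    have : Integrable ((Ioi (0:ℝ)).indicator (fun x => x ^ k * (r * rexp (-(r * x))))) volume :=
      (integrable_indicator_iff measurableSet_Ioi).2 hIoi
    refine this.congr ?_
    filter_upwards [hind] with x hx
    rw [← hx]
    simp [Real.coe_toNNReal _ (exponentialPDFReal_nonneg hr x)]
    ring
  refine ⟨hint, ?_⟩
  rw [hexp, integral_withDensity_eq_integral_smul hmeaspdf]
  have : ∫ x, (exponentialPDFReal r x).toNNReal • x ^ k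
      = ∫ x, (Ioi (0:ℝ)).indicator (fun x => x ^ k * (r * rexp (-(r * x)))) x := by
    refine integral_congr_ae ?_
    filter_upwards [hind] with x hx
    rw [← hx, NNReal.smul_def, smul_eq_mul, Real.coe_toNNReal _ (exponentialPDFReal_nonneg hr x)]
  rw [this, integral_indicator measurableSet_Ioi]
  have hG : ∫ x in Ioi (0:ℝ), x ^ ((k:ℝ) + 1 - 1) * rexp (-(r * x))
      = (1 / r) ^ ((k:ℝ)+1) * Real.Gamma ((k:ℝ)+1) :=
    integral_rpow_mul_exp_neg_mul_Ioi (by positivity) hr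
  have heq : ∫ x in Ioi (0:ℝ), x ^ k * (r * rexp (-(r * x)))
      = r * ∫ x in Ioi (0:ℝ), x ^ ((k:ℝ) + 1 - 1) * rexp (-(r * x)) := by
    rw [← integral_const_mul]
    refine setIntegral_congr_fun measurableSet_Ioi (fun x hx => ?_)
    rw [add_sub_cancel_right, rpow_natCast]
    ring
  have hGam : Real.Gamma ((k:ℝ)+1) = (Nat.factorial k : ℝ) := by
    exact_mod_cast Real.Gamma_nat_eq_factorial k
  rw [heq, hG, hGam, show ((k:ℝ)+1) = ((k+1:ℕ):ℝ) by push_cast; ring, Real.rpow_natCast]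
  field_simp
  rw [one_div, inv_pow, pow_succ]; field_simp [hr.ne']


private lemma indep_prod_integral' {Ω : Type*} [MeasurableSpace Ω] {P : Measure Ω} [IsProbabilityMeasure P]
    {n : ℕ} {Y : Fin n → Ω → ℝ}
    (hindep : iIndepFun Y P)
    (hm : ∀ i, Measurable (Y i)) (hint : ∀ i, Integrable (Y i) P) (s : Finset (Fin n)) :
    Integrable (fun ω => ∏ i ∈ s, Y i ω) P ∧
      ∫ ω, ∏ i ∈ s, Y i ω ∂P = ∏ i ∈ s, ∫ ω, Y i ω ∂P := by
  classical
  induction s using Finset.cons_induction with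
  | empty => simp [integrable_const]
  | cons a s ha ih =>
    have hIF : IndepFun (∏ j ∈ s, Y j) (Y a) P :=
      hindep.indepFun_finsetProd_of_notMem hm ha
    have hps : (∏ j ∈ s, Y j) = fun ω => ∏ j ∈ s, Y j ω := by
      funext ω; simp [Finset.prod_apply]
    have hint2 : Integrable ((∏ j ∈ s, Y j) * Y a) P := by
      refine hIF.integrable_mul ?_ (hint a)
      rw [hps]; exact ih.1
    have hmul : (fun ω => ∏ i ∈ Finset.cons a s ha, Y i ω)
        = (∏ j ∈ s, Y j) * Y a := by
      funext ω; simp only [Pi.mul_apply, Finset.prod_apply, Finset.cons_eq_insert,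
        Finset.prod_insert ha]; ring
    constructor
    · rw [hmul]; exact hint2
    · rw [Finset.prod_cons, hmul]
      rw [hIF.integral_mul_eq_mul_integral (by rw [hps]; exact ih.1.1) (hint a).1]
      rw [hps, ih.2]; ring


end Aux

/-- For i.i.d. exponential random variables with mean `lam > 0`, the second moment of the
sum of squared deviations from the sample mean satisfies
`E[S⁴] = ((n - 1)(n² + 7n - 6)/n) λ⁴`. -/
theorem expectation_sq_of_sum_sq_dev_of_iid_exponential
    {Ω : Type*} [MeasurableSpace Ω] (P : Measure Ω) [IsProbabilityMeasure P]
    (n : ℕ) (hn : 1 ≤ n) (lam : ℝ) (hlam : 0 < lam)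
    (X : Fin n → Ω → ℝ) (hmeas : ∀ i, Measurable (X i))
    (hindep : iIndepFun X P)
    (hdist : ∀ i, Measure.map (X i) P = expMeasure lam⁻¹) :
    ∫ ω, (∑ i, (X i ω - (∑ j, X j ω) / n) ^ 2) ^ 2 ∂P =
      ((n : ℝ) - 1) * ((n : ℝ) ^ 2 + 7 * n - 6) / n * lam ^ 4 := by
  classical
  have hn0 : (n : ℝ) ≠ 0 := by
    have : (0:ℝ) < n := by exact_mod_cast Nat.pos_of_ne_zero (by omega)
    exact ne_of_gt this
  -- moments of the individual variables
  have hmom : ∀ (i : Fin n) (k : ℕ), Integrable (fun ω => X i ω ^ k) P ∧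
      ∫ ω, X i ω ^ k ∂P = (Nat.factorial k : ℝ) * lam ^ k := by
    intro i k
    have hr : (0:ℝ) < lam⁻¹ := inv_pos.2 hlam
    obtain ⟨hint, hval⟩ := exp_moment' hr k
    have hmap : Measure.map (X i) P = expMeasure lam⁻¹ := hdist i
    constructor
    · have h2 : Integrable (fun x => x ^ k) (Measure.map (X i) P) := by rw [hmap]; exact hint
      exact (integrable_map_measure h2.1 (hmeas i).aemeasurable).mp h2
    · have h1 : ∫ ω, X i ω ^ k ∂P = ∫ x, x ^ k ∂(Measure.map (X i) P) :=
        (integral_map (hmeas i).aemeasurable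
          (measurable_id.pow_const k).aestronglyMeasurable).symm
      rw [h1, hmap, hval, inv_pow, div_eq_mul_inv, inv_inv]
  -- expectation of monomials
  have hmono : ∀ e : Fin n → ℕ, Integrable (fun ω => ∏ m, X m ω ^ e m) P ∧
      ∫ ω, ∏ m, X m ω ^ e m ∂P
        = ((∏ m, Nat.factorial (e m) : ℕ) : ℝ) * lam ^ (∑ m, e m) := by
    intro e
    have hYindep : iIndepFun (fun i ω => X i ω ^ e i) P :=
      hindep.comp (fun i x => x ^ e i) (fun i => measurable_id.pow_const (e i))
    have hYm : ∀ i, Measurable (fun ω => X i ω ^ e i) := fun i => (hmeas i).pow_const (e i)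
    have hYint : ∀ i, Integrable (fun ω => X i ω ^ e i) P := fun i => (hmom i (e i)).1
    obtain ⟨hI, hV⟩ := indep_prod_integral' hYindep hYm hYint Finset.univ
    refine ⟨hI, ?_⟩
    rw [hV]
    have : ∀ i : Fin n, (i ∈ Finset.univ) → ∫ ω, X i ω ^ e i ∂P
        = (Nat.factorial (e i) : ℝ) * lam ^ e i := fun i _ => (hmom i (e i)).2
    rw [Finset.prod_congr rfl this, Finset.prod_mul_distrib, Finset.prod_pow_eq_pow_sum]
    push_cast
    ring
  -- indicator exponents
  set d : Fin n → Fin n → ℕ := fun m i => if m = i then 1 else 0 with hd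
  have hsum_d : ∀ i : Fin n, ∑ m, d m i = 1 := by
    intro i; simp [hd]
  have hXsingle : ∀ (ω : Ω) (i : Fin n), ∏ m, X m ω ^ d m i = X i ω := by
    intro ω i
    rw [Finset.prod_eq_single i (fun b _ hb => by simp [hd, hb]) (by simp)]
    simp [hd]
  -- the quadruple monomials
  have hprod4 : ∀ (ω : Ω) (a b c f : Fin n),
      X a ω * X b ω * X c ω * X f ω = ∏ m, X m ω ^ (d m a + d m b + d m c + d m f) := by
    intro ω a b c f
    simp only [pow_add, Finset.prod_mul_distrib, hXsingle]
  have hMint : ∀ a b c f : Fin n,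
      Integrable (fun ω => X a ω * X b ω * X c ω * X f ω) P := by
    intro a b c f
    have := (hmono (fun m => d m a + d m b + d m c + d m f)).1
    refine this.congr ?_
    exact Eventually.of_forall fun ω => (hprod4 ω a b c f).symm
  have hMsum : ∀ a b c f : Fin n, (∑ m, (d m a + d m b + d m c + d m f)) = 4 := by
    intro a b c f
    simp only [Finset.sum_add_distrib, hsum_d]
  -- peeling lemma for factorial products
  have hpeel : ∀ (e : Fin n → ℕ) (l : Fin n),
      ∏ m, Nat.factorial (e m + d m l) = (∏ m, Nat.factorial (e m)) * (e l + 1) := by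
    intro e l
    rw [← Finset.mul_prod_erase Finset.univ (fun m => Nat.factorial (e m + d m l))
        (Finset.mem_univ l),
      ← Finset.mul_prod_erase Finset.univ (fun m => Nat.factorial (e m)) (Finset.mem_univ l)]
    have hrest : ∏ m ∈ Finset.univ.erase l, Nat.factorial (e m + d m l)
        = ∏ m ∈ Finset.univ.erase l, Nat.factorial (e m) := by
      refine Finset.prod_congr rfl fun m hm => ?_
      simp [hd, Finset.ne_of_mem_erase hm]
    rw [hrest]
    simp [hd, Nat.factorial_succ]
    ring
  have hW1 : ∀ a : Fin n, ∏ m, Nat.factorial (d m a) = 1 := by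
    intro a
    refine Finset.prod_eq_one fun m _ => ?_
    by_cases h : m = a <;> simp [hd, h]
  have hW4 : ∀ a b c f : Fin n,
      ∏ m, Nat.factorial (d m a + d m b + d m c + d m f)
        = (d b a + 1) * ((d c a + d c b + 1) * ((d f a + d f b + d f c + 1))) := by
    intro a b c f
    rw [hpeel (fun m => d m a + d m b + d m c) f, hpeel (fun m => d m a + d m b) c,
      hpeel (fun m => d m a) b, hW1 a]
    ring
  -- integral of a quadruple monomial
  have hMval : ∀ a b c f : Fin n,
      ∫ ω, X a ω * X b ω * X c ω * X f ω ∂P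
        = lam ^ 4 * (((d b a + 1) * ((d c a + d c b + 1) * (d f a + d f b + d f c + 1)) : ℕ) : ℝ) := by
    intro a b c f
    have h1 : ∫ ω, X a ω * X b ω * X c ω * X f ω ∂P
        = ∫ ω, ∏ m, X m ω ^ (d m a + d m b + d m c + d m f) ∂P :=
      integral_congr_ae (Eventually.of_forall fun ω => hprod4 ω a b c f)
    rw [h1, (hmono _).2, hMsum a b c f, hW4 a b c f]
    push_cast
    ring
  -- index-sum helper lemmas (ℕ)
  have hs1 : ∀ a b c : Fin n, ∑ l : Fin n, (d l a + d l b + d l c + 1) = n + 3 := by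
    intro a b c
    simp only [Finset.sum_add_distrib, hsum_d, Finset.sum_const, Finset.card_univ,
      Fintype.card_fin, smul_eq_mul]
    omega
  have hs2 : ∀ a b : Fin n, ∑ k : Fin n, (d k a + d k b + 1) = n + 2 := by
    intro a b
    simp only [Finset.sum_add_distrib, hsum_d, Finset.sum_const, Finset.card_univ,
      Fintype.card_fin, smul_eq_mul]
    omega
  have hs3 : ∀ a : Fin n, ∑ j : Fin n, (d j a + 1) = n + 1 := by
    intro a
    simp only [Finset.sum_add_distrib, hsum_d, Finset.sum_const, Finset.card_univ,
      Fintype.card_fin, smul_eq_mul]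
    omega
  -- the three counting identities
  have hcntA : (∑ i : Fin n, ∑ j : Fin n,
      (d i i + 1) * ((d j i + d j i + 1) * (d j i + d j i + d j j + 1))) = n * (4 * n + 20) := by
    have h1 : ∀ i j : Fin n,
        (d i i + 1) * ((d j i + d j i + 1) * (d j i + d j i + d j j + 1))
          = 4 + (if j = i then 20 else 0) := by
      intro i j
      by_cases h : j = i
      · subst h; simp [hd]
      · simp [hd, h]
    calc (∑ i : Fin n, ∑ j : Fin n,
        (d i i + 1) * ((d j i + d j i + 1) * (d j i + d j i + d j j + 1)))
        = ∑ _i : Fin n, (4 * n + 20) := by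
          refine Finset.sum_congr rfl fun i _ => ?_
          rw [Finset.sum_congr rfl fun j _ => h1 i j, Finset.sum_add_distrib, Finset.sum_const,
            Finset.card_univ, Fintype.card_fin, Finset.sum_ite_eq' Finset.univ i fun _ => 20]
          simp; omega
      _ = n * (4 * n + 20) := by
          rw [Finset.sum_const, Finset.card_univ, Fintype.card_fin, smul_eq_mul]
  have hcntB : (∑ i : Fin n, ∑ j : Fin n, ∑ k : Fin n,
      (d i i + 1) * ((d j i + d j i + 1) * (d k i + d k i + d k j + 1)))
        = n * (2 * ((n + 2) * (n + 3))) := by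
    have hin : ∀ i j : Fin n, ∑ k : Fin n,
        (d i i + 1) * ((d j i + d j i + 1) * (d k i + d k i + d k j + 1))
          = (d i i + 1) * ((d j i + d j i + 1) * (n + 3)) := by
      intro i j
      rw [← Finset.mul_sum, ← Finset.mul_sum, hs1 i i j]
    have hmid : ∀ i : Fin n, ∑ j : Fin n, (d i i + 1) * ((d j i + d j i + 1) * (n + 3))
        = (d i i + 1) * ((n + 2) * (n + 3)) := by
      intro i
      rw [← Finset.mul_sum, ← Finset.sum_mul]
      congr 2
      have := hs2 i i
      simpa using this
    calc (∑ i : Fin n, ∑ j : Fin n, ∑ k : Fin n,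
        (d i i + 1) * ((d j i + d j i + 1) * (d k i + d k i + d k j + 1)))
        = ∑ i : Fin n, ∑ j : Fin n, (d i i + 1) * ((d j i + d j i + 1) * (n + 3)) :=
          Finset.sum_congr rfl fun i _ => Finset.sum_congr rfl fun j _ => by rw [← hin i j]
      _ = ∑ i : Fin n, (d i i + 1) * ((n + 2) * (n + 3)) :=
          Finset.sum_congr rfl fun i _ => hmid i
      _ = ∑ _i : Fin n, 2 * ((n + 2) * (n + 3)) :=
          Finset.sum_congr rfl fun i _ => by simp [hd]
      _ = n * (2 * ((n + 2) * (n + 3))) := by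
          rw [Finset.sum_const, Finset.card_univ, Fintype.card_fin, smul_eq_mul]
  have hcntC : (∑ i : Fin n, ∑ j : Fin n, ∑ k : Fin n, ∑ l : Fin n,
      (d j i + 1) * ((d k i + d k j + 1) * (d l i + d l j + d l k + 1)))
        = n * ((n + 1) * ((n + 2) * (n + 3))) := by
    have h4 : ∀ i j k : Fin n, ∑ l : Fin n,
        (d j i + 1) * ((d k i + d k j + 1) * (d l i + d l j + d l k + 1))
          = (d j i + 1) * ((d k i + d k j + 1) * (n + 3)) := by
      intro i j k
      rw [← Finset.mul_sum, ← Finset.mul_sum, hs1 i j k]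
    have h3 : ∀ i j : Fin n, ∑ k : Fin n, (d j i + 1) * ((d k i + d k j + 1) * (n + 3))
        = (d j i + 1) * ((n + 2) * (n + 3)) := by
      intro i j
      rw [← Finset.mul_sum, ← Finset.sum_mul, hs2 i j]
    have h2 : ∀ i : Fin n, ∑ j : Fin n, (d j i + 1) * ((n + 2) * (n + 3))
        = (n + 1) * ((n + 2) * (n + 3)) := by
      intro i
      rw [← Finset.sum_mul, hs3 i]
    calc (∑ i : Fin n, ∑ j : Fin n, ∑ k : Fin n, ∑ l : Fin n,
        (d j i + 1) * ((d k i + d k j + 1) * (d l i + d l j + d l k + 1)))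
        = ∑ i : Fin n, ∑ j : Fin n, ∑ k : Fin n,
            (d j i + 1) * ((d k i + d k j + 1) * (n + 3)) :=
          Finset.sum_congr rfl fun i _ => Finset.sum_congr rfl fun j _ =>
            Finset.sum_congr rfl fun k _ => h4 i j k
      _ = ∑ i : Fin n, ∑ j : Fin n, (d j i + 1) * ((n + 2) * (n + 3)) :=
          Finset.sum_congr rfl fun i _ => Finset.sum_congr rfl fun j _ => h3 i j
      _ = ∑ _i : Fin n, (n + 1) * ((n + 2) * (n + 3)) :=
          Finset.sum_congr rfl fun i _ => h2 i
      _ = n * ((n + 1) * ((n + 2) * (n + 3))) := by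
          rw [Finset.sum_const, Finset.card_univ, Fintype.card_fin, smul_eq_mul]
  -- pointwise expansions
  have hfq2 : ∀ ω : Ω, (∑ i, X i ω ^ 2) ^ 2
      = ∑ i, ∑ j, X i ω * X i ω * X j ω * X j ω := by
    intro ω
    rw [sq, Finset.sum_mul_sum]
    exact Finset.sum_congr rfl fun i _ => Finset.sum_congr rfl fun j _ => by ring
  have hfqt2 : ∀ ω : Ω, (∑ i, X i ω ^ 2) * (∑ i, X i ω) ^ 2
      = ∑ i, ∑ j, ∑ k, X i ω * X i ω * X j ω * X k ω := by
    intro ω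
    rw [sq, Finset.sum_mul_sum, Finset.sum_mul_sum]
    refine Finset.sum_congr rfl fun i _ => Finset.sum_congr rfl fun j _ => ?_
    rw [Finset.mul_sum]
    exact Finset.sum_congr rfl fun k _ => by ring
  have hft4 : ∀ ω : Ω, (∑ i, X i ω) ^ 4
      = ∑ i, ∑ j, ∑ k, ∑ l, X i ω * X j ω * X k ω * X l ω := by
    intro ω
    rw [show ((∑ i, X i ω)) ^ 4
        = ((∑ i, X i ω) * (∑ i, X i ω)) * ((∑ i, X i ω) * (∑ i, X i ω)) by ring]
    rw [Finset.sum_mul_sum, Finset.sum_mul_sum]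
    refine Finset.sum_congr rfl fun i _ => Finset.sum_congr rfl fun j _ => ?_
    rw [Finset.sum_mul_sum]
    exact Finset.sum_congr rfl fun k _ => Finset.sum_congr rfl fun l _ => by ring
  -- integrability of the three pieces
  have hIq2 : Integrable (fun ω => (∑ i, X i ω ^ 2) ^ 2) P := by
    have he : (fun ω => (∑ i, X i ω ^ 2) ^ 2)
        = fun ω => ∑ i, ∑ j, X i ω * X i ω * X j ω * X j ω := funext hfq2
    rw [he]
    exact integrable_finset_sum _ fun i _ => integrable_finset_sum _ fun j _ => hMint i i j j
  have hIqt2 : Integrable (fun ω => (∑ i, X i ω ^ 2) * (∑ i, X i ω) ^ 2) P := by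
    have he : (fun ω => (∑ i, X i ω ^ 2) * (∑ i, X i ω) ^ 2)
        = fun ω => ∑ i, ∑ j, ∑ k, X i ω * X i ω * X j ω * X k ω := funext hfqt2
    rw [he]
    exact integrable_finset_sum _ fun i _ => integrable_finset_sum _ fun j _ =>
      integrable_finset_sum _ fun k _ => hMint i i j k
  have hIt4 : Integrable (fun ω => (∑ i, X i ω) ^ 4) P := by
    have he : (fun ω => (∑ i, X i ω) ^ 4)
        = fun ω => ∑ i, ∑ j, ∑ k, ∑ l, X i ω * X j ω * X k ω * X l ω := funext hft4
    rw [he]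
    exact integrable_finset_sum _ fun i _ => integrable_finset_sum _ fun j _ =>
      integrable_finset_sum _ fun k _ => integrable_finset_sum _ fun l _ => hMint i j k l
  -- values of the three integrals
  have hVq2 : ∫ ω, (∑ i, X i ω ^ 2) ^ 2 ∂P = lam ^ 4 * ((n * (4 * n + 20) : ℕ) : ℝ) := by
    rw [integral_congr_ae (Filter.Eventually.of_forall hfq2)]
    rw [integral_finset_sum _ fun i _ => integrable_finset_sum _ fun j _ => hMint i i j j]
    rw [Finset.sum_congr rfl fun i _ =>
      integral_finset_sum _ fun j _ => hMint i i j j]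
    rw [Finset.sum_congr rfl fun i (_ : i ∈ Finset.univ) =>
      Finset.sum_congr rfl fun j _ => hMval i i j j]
    simp only [← Finset.mul_sum]
    rw [← hcntA]
    push_cast
    ring
  have hVqt2 : ∫ ω, (∑ i, X i ω ^ 2) * (∑ i, X i ω) ^ 2 ∂P
      = lam ^ 4 * ((n * (2 * ((n + 2) * (n + 3))) : ℕ) : ℝ) := by
    rw [integral_congr_ae (Filter.Eventually.of_forall hfqt2)]
    rw [integral_finset_sum _ fun i _ => integrable_finset_sum _ fun j _ =>
      integrable_finset_sum _ fun k _ => hMint i i j k]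
    rw [Finset.sum_congr rfl fun i (_ : i ∈ Finset.univ) =>
      integral_finset_sum _ fun j _ => integrable_finset_sum _ fun k _ => hMint i i j k]
    rw [Finset.sum_congr rfl fun i (_ : i ∈ Finset.univ) =>
      Finset.sum_congr rfl fun j (_ : j ∈ Finset.univ) =>
        integral_finset_sum _ fun k _ => hMint i i j k]
    rw [Finset.sum_congr rfl fun i (_ : i ∈ Finset.univ) =>
      Finset.sum_congr rfl fun j (_ : j ∈ Finset.univ) =>
        Finset.sum_congr rfl fun k _ => hMval i i j k]
    simp only [← Finset.mul_sum]
    rw [← hcntB]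
    push_cast
    ring
  have hVt4 : ∫ ω, (∑ i, X i ω) ^ 4 ∂P
      = lam ^ 4 * ((n * ((n + 1) * ((n + 2) * (n + 3))) : ℕ) : ℝ) := by
    rw [integral_congr_ae (Filter.Eventually.of_forall hft4)]
    rw [integral_finset_sum _ fun i _ => integrable_finset_sum _ fun j _ =>
      integrable_finset_sum _ fun k _ => integrable_finset_sum _ fun l _ => hMint i j k l]
    rw [Finset.sum_congr rfl fun i (_ : i ∈ Finset.univ) =>
      integral_finset_sum _ fun j _ => integrable_finset_sum _ fun k _ =>
        integrable_finset_sum _ fun l _ => hMint i j k l]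
    rw [Finset.sum_congr rfl fun i (_ : i ∈ Finset.univ) =>
      Finset.sum_congr rfl fun j (_ : j ∈ Finset.univ) =>
        integral_finset_sum _ fun k _ => integrable_finset_sum _ fun l _ => hMint i j k l]
    rw [Finset.sum_congr rfl fun i (_ : i ∈ Finset.univ) =>
      Finset.sum_congr rfl fun j (_ : j ∈ Finset.univ) =>
        Finset.sum_congr rfl fun k (_ : k ∈ Finset.univ) =>
          integral_finset_sum _ fun l _ => hMint i j k l]
    rw [Finset.sum_congr rfl fun i (_ : i ∈ Finset.univ) =>
      Finset.sum_congr rfl fun j (_ : j ∈ Finset.univ) =>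
        Finset.sum_congr rfl fun k (_ : k ∈ Finset.univ) =>
          Finset.sum_congr rfl fun l _ => hMval i j k l]
    simp only [← Finset.mul_sum]
    rw [← hcntC]
    push_cast
    ring
  -- pointwise identity for the integrand
  have hpt : ∀ ω : Ω, (∑ i, (X i ω - (∑ j, X j ω) / n) ^ 2) ^ 2
      = (∑ i, X i ω ^ 2) ^ 2 - 2 / (n : ℝ) * ((∑ i, X i ω ^ 2) * (∑ i, X i ω) ^ 2)
        + 1 / (n : ℝ) ^ 2 * (∑ i, X i ω) ^ 4 := by
    intro ω
    have h1 : ∑ i, (X i ω - (∑ j, X j ω) / n) ^ 2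
        = (∑ i, X i ω ^ 2) - (∑ i, X i ω) ^ 2 / n := by
      have hterm : ∀ i : Fin n, (X i ω - (∑ j, X j ω) / n) ^ 2
          = X i ω ^ 2 - 2 * ((∑ j, X j ω) / n) * X i ω + ((∑ j, X j ω) / n) ^ 2 :=
        fun i => by ring
      rw [Finset.sum_congr rfl fun i _ => hterm i, Finset.sum_add_distrib,
        Finset.sum_sub_distrib, ← Finset.mul_sum, Finset.sum_const, Finset.card_univ,
        Fintype.card_fin, nsmul_eq_mul]
      field_simp
      ring
    rw [h1]
    field_simp
    ring
  -- put everything together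
  have hsplit : ∫ ω, (∑ i, (X i ω - (∑ j, X j ω) / n) ^ 2) ^ 2 ∂P
      = ∫ ω, ((∑ i, X i ω ^ 2) ^ 2 - 2 / (n : ℝ) * ((∑ i, X i ω ^ 2) * (∑ i, X i ω) ^ 2)
          + 1 / (n : ℝ) ^ 2 * (∑ i, X i ω) ^ 4) ∂P :=
    integral_congr_ae (Filter.Eventually.of_forall hpt)
  have hI1 : Integrable (fun ω => 2 / (n : ℝ) * ((∑ i, X i ω ^ 2) * (∑ i, X i ω) ^ 2)) P :=
    hIqt2.const_mul _
  have hI2 : Integrable (fun ω => 1 / (n : ℝ) ^ 2 * (∑ i, X i ω) ^ 4) P := hIt4.const_mul _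
  have hI3 : Integrable (fun ω => (∑ i, X i ω ^ 2) ^ 2
      - 2 / (n : ℝ) * ((∑ i, X i ω ^ 2) * (∑ i, X i ω) ^ 2)) P := hIq2.sub hI1
  rw [hsplit, integral_add hI3 hI2, integral_sub hIq2 hI1,
    integral_const_mul, integral_const_mul, hVq2, hVqt2, hVt4]
  push_cast
  field_simp
  ring
end

section
/- Let n ≥ 1 and let X₁,…,Xₙ be i.i.d. exponential random variables with mean λ > 0. With T = Σᵢ Xᵢ, X̄ = T/n, and S² = Σᵢ (Xᵢ − X̄)², the conditional expectation of S² given the σ-algebra generated by T satisfies E[S² | T] = ((n − 1)/(n(n + 1))) T² almost surely. -/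
open MeasureTheory ProbabilityTheory Filter Real Set
open scoped ENNReal

variable {r : ℝ}

lemma exp_lint (hr : 0 < r) (g : ℝ → ℝ≥0∞) (hg : Measurable g) :
    ∫⁻ a, g a ∂(expMeasure r)
      = ∫⁻ a in Ioi (0:ℝ), ENNReal.ofReal (r * Real.exp (-(r*a))) * g a := by
  have hpdf : Measurable (gammaPDF 1 r) := (measurable_gammaPDFReal 1 r).ennreal_ofReal
  rw [expMeasure, gammaMeasure, lintegral_withDensity_eq_lintegral_mul _ hpdf hg]
  rw [← lintegral_add_compl (fun a => (gammaPDF 1 r * g) a) measurableSet_Iio (μ := volume)]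
  have h1 : ∫⁻ a in Iio (0:ℝ), (gammaPDF 1 r * g) a = 0 := by
    rw [setLIntegral_congr_fun (g := fun _ => (0:ℝ≥0∞)) measurableSet_Iio
      (fun a (ha : a < 0) => by
        simp [Pi.mul_apply, gammaPDF_of_neg ha])]
    simp
  rw [h1, zero_add, compl_Iio, ← setLIntegral_congr (Ioi_ae_eq_Ici (a := (0:ℝ)))]
  refine setLIntegral_congr_fun measurableSet_Ioi (fun a (ha : 0 < a) => ?_)
  have : gammaPDF 1 r a = exponentialPDF r a := rfl
  rw [Pi.mul_apply, this, exponentialPDF_of_nonneg ha.le]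

lemma ipow (s : ℝ) (m : ℕ) : ∫ a in (0:ℝ)..s, (s - a)^m = s^(m+1)/(m+1) := by
  rw [intervalIntegral.integral_comp_sub_left (fun x => x^m) s]
  simp [integral_pow]

lemma ip0 (s : ℝ) (q : ℕ) (hs : 0 < s) :
    ∫ a in (0:ℝ)..s, a^0 * (s - a)^q = 1/(q+1) * s^(0+q+1) := by
  simp only [pow_zero, one_mul]
  rw [ipow]
  ring

lemma ip2 (s : ℝ) (q : ℕ) (hs : 0 < s) :
    ∫ a in (0:ℝ)..s, a^2 * (s - a)^q
      = 2/((q+1)*(q+2)*(q+3)) * s^(2+q+1) := by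
  have h : ∀ a ∈ uIcc (0:ℝ) s, a^2 * (s-a)^q
      = (s-a)^(q+2) - 2*s*(s-a)^(q+1) + s^2*(s-a)^q := fun a _ => by ring
  rw [intervalIntegral.integral_congr h]
  have i1 : IntervalIntegrable (fun a => (s-a)^(q+2)) volume 0 s :=
    (Continuous.intervalIntegrable (by continuity) _ _)
  have i2 : IntervalIntegrable (fun a => 2*s*(s-a)^(q+1)) volume 0 s :=
    (Continuous.intervalIntegrable (by continuity) _ _)
  have i3 : IntervalIntegrable (fun a => s^2*(s-a)^q) volume 0 s :=
    (Continuous.intervalIntegrable (by continuity) _ _)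
  rw [intervalIntegral.integral_add (i1.sub i2) i3, intervalIntegral.integral_sub i1 i2]
  have e2 : ∫ a in (0:ℝ)..s, 2*s*(s-a)^(q+1) = 2*s*(s^(q+2)/(q+2)) := by
    rw [intervalIntegral.integral_const_mul, ipow]; try push_cast; try ring
  have e3 : ∫ a in (0:ℝ)..s, s^2*(s-a)^q = s^2*(s^(q+1)/(q+1)) := by
    rw [intervalIntegral.integral_const_mul, ipow]; try push_cast; try ring
  rw [ipow, e2, e3]
  have h1 : (q:ℝ)+1 ≠ 0 := by positivity
  have h2 : (q:ℝ)+2 ≠ 0 := by positivity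
  have h3 : (q:ℝ)+3 ≠ 0 := by positivity
  push_cast
  field_simp
  ring

lemma shift_lint (a : ℝ) (F : ℝ → ℝ≥0∞) (hF : Measurable F) :
    ∫⁻ t, F (a + t) = ∫⁻ s, F s :=
  (measurePreserving_add_left volume a).lintegral_comp hF

lemma conv_lemma (hr : 0 < r) (p q : ℕ) (c : ℝ)
    (hc : ∀ s : ℝ, 0 < s → ∫ x in (0:ℝ)..s, x^p * (s-x)^q = c * s^(p+q+1))
    (g : ℝ → ℝ≥0∞) (hg : Measurable g) :
    ∫⁻ a in Ioi (0:ℝ), ENNReal.ofReal (a^p * Real.exp (-(r*a)))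
        * ∫⁻ t in Ioi (0:ℝ), ENNReal.ofReal (t^q * Real.exp (-(r*t))) * g (a+t)
      = ENNReal.ofReal c
          * ∫⁻ s in Ioi (0:ℝ), ENNReal.ofReal (s^(p+q+1) * Real.exp (-(r*s))) * g s := by
  have hcnn : 0 ≤ c := by
    have h1 := hc 1 one_pos
    simp only [one_pow, mul_one] at h1
    rw [← h1]
    apply intervalIntegral.integral_nonneg zero_le_one
    intro x hx
    exact mul_nonneg (pow_nonneg hx.1 _) (pow_nonneg (by linarith [hx.2] : (0:ℝ) ≤ 1 - x) _)
  set S : Set (ℝ × ℝ) := {z : ℝ × ℝ | 0 < z.1 ∧ z.1 < z.2} with hS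
  have hSm : MeasurableSet S :=
    (measurableSet_lt measurable_const measurable_fst).inter
      (measurableSet_lt measurable_fst measurable_snd)
  set Φ : ℝ × ℝ → ℝ≥0∞ := fun z =>
    S.indicator (fun z => ENNReal.ofReal (z.1^p * (z.2-z.1)^q * Real.exp (-(r*z.2))) * g z.2) z
    with hΦ
  have hΦm : Measurable Φ := by
    apply Measurable.indicator _ hSm
    exact ((((measurable_fst.pow_const p).mul
      ((measurable_snd.sub measurable_fst).pow_const q)).mul
      ((measurable_snd.const_mul r).neg.exp)).ennreal_ofReal).mul (hg.comp measurable_snd)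
  -- Step 1: LHS = ∫⁻ a, ∫⁻ s, Φ (a, s)
  have step1 : ∫⁻ a in Ioi (0:ℝ), ENNReal.ofReal (a^p * Real.exp (-(r*a)))
        * ∫⁻ t in Ioi (0:ℝ), ENNReal.ofReal (t^q * Real.exp (-(r*t))) * g (a+t)
      = ∫⁻ a, ∫⁻ s, Φ (a, s) := by
    rw [← lintegral_indicator measurableSet_Ioi _]
    refine lintegral_congr fun a => ?_
    rcases le_or_gt a 0 with ha | ha
    · rw [Set.indicator_of_notMem (by simpa using ha)]
      have hzero : ∀ s : ℝ, Φ (a, s) = 0 := by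
        intro s
        apply Set.indicator_of_notMem
        simp only [hS, mem_setOf_eq, not_and]
        intro h; linarith
      simp only [hzero, lintegral_zero]
    · rw [Set.indicator_of_mem (by simpa using ha)]
      have hFm : Measurable fun s => (Ioi a).indicator
          (fun s => ENNReal.ofReal ((s-a)^q * Real.exp (-(r*(s-a)))) * g s) s := by
        apply Measurable.indicator _ measurableSet_Ioi
        exact ((((measurable_id.sub measurable_const).pow_const q).mul
          (((measurable_id.sub measurable_const).const_mul r).neg.exp)).ennreal_ofReal).mul hg
      have hshift : ∫⁻ t in Ioi (0:ℝ), ENNReal.ofReal (t^q * Real.exp (-(r*t))) * g (a+t)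
          = ∫⁻ s, (Ioi a).indicator
              (fun s => ENNReal.ofReal ((s-a)^q * Real.exp (-(r*(s-a)))) * g s) s := by
        rw [← lintegral_indicator measurableSet_Ioi _, ← shift_lint a _ hFm]
        refine lintegral_congr fun t => ?_
        rcases le_or_gt t 0 with ht | ht
        · rw [Set.indicator_of_notMem (by simpa using ht),
            Set.indicator_of_notMem (by simp; linarith)]
        · rw [Set.indicator_of_mem (by simpa using ht),
            Set.indicator_of_mem (by simp; linarith)]
          simp
      rw [hshift, ← lintegral_const_mul _ hFm]
      refine lintegral_congr fun s => ?_
      rcases le_or_gt s a with hs | hs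
      · rw [Set.indicator_of_notMem (by simpa using hs), mul_zero]
        symm
        apply Set.indicator_of_notMem
        simp only [hS, mem_setOf_eq, not_and]
        intro _; linarith
      · rw [Set.indicator_of_mem (by simpa using hs)]
        have hmem : (a, s) ∈ S := ⟨ha, hs⟩
        simp only [hΦ, Set.indicator_of_mem hmem]
        rw [← mul_assoc, ← ENNReal.ofReal_mul
          (mul_nonneg (pow_nonneg ha.le _) (Real.exp_nonneg _))]
        congr 2
        rw [show -(r*s) = -(r*a) + -(r*(s-a)) by ring, Real.exp_add]
        ring
  rw [step1, lintegral_lintegral_swap hΦm.aemeasurable]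
  -- Step 2: inner integral over a
  have step2 : ∀ s : ℝ, ∫⁻ a, Φ (a, s)
      = (Ioi (0:ℝ)).indicator (fun s =>
          ENNReal.ofReal c * (ENNReal.ofReal (s^(p+q+1) * Real.exp (-(r*s))) * g s)) s := by
    intro s
    rcases le_or_gt s 0 with hs | hs
    · rw [Set.indicator_of_notMem (by simpa using hs)]
      have hzero : ∀ a : ℝ, Φ (a, s) = 0 := by
        intro a
        apply Set.indicator_of_notMem
        simp only [hS, mem_setOf_eq, not_and]
        intro h; linarith
      simp only [hzero, lintegral_zero]
    · rw [Set.indicator_of_mem (by simpa using hs)]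
      have key : ∀ a : ℝ, Φ (a, s) = (Ioo (0:ℝ) s).indicator
          (fun a => ENNReal.ofReal (a^p * (s-a)^q)) a
            * (ENNReal.ofReal (Real.exp (-(r*s))) * g s) := by
        intro a
        rcases em (a ∈ Ioo (0:ℝ) s) with h | h
        · rw [Set.indicator_of_mem h]
          have hmem : (a, s) ∈ S := ⟨h.1, h.2⟩
          simp only [hΦ, Set.indicator_of_mem hmem]
          rw [← mul_assoc, ← ENNReal.ofReal_mul
            (mul_nonneg (pow_nonneg h.1.le _) (pow_nonneg (sub_nonneg.mpr h.2.le) _))]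
        · rw [Set.indicator_of_notMem h, zero_mul]
          apply Set.indicator_of_notMem
          simp only [hS, mem_setOf_eq, mem_Ioo] at h ⊢
          tauto
      simp_rw [key]
      have hindm : Measurable ((Ioo (0:ℝ) s).indicator
          (fun a => ENNReal.ofReal (a^p * (s-a)^q))) := by
        apply Measurable.indicator _ measurableSet_Ioo
        exact ((measurable_id.pow_const p).mul
          ((measurable_const.sub measurable_id).pow_const q)).ennreal_ofReal
      rw [lintegral_mul_const _ hindm, lintegral_indicator measurableSet_Ioo _]
      have hIoc : ∫⁻ a in Ioo (0:ℝ) s, ENNReal.ofReal (a^p * (s-a)^q)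
          = ∫⁻ a in Ioc (0:ℝ) s, ENNReal.ofReal (a^p * (s-a)^q) :=
        setLIntegral_congr Ioo_ae_eq_Ioc
      have hint : IntegrableOn (fun a => a^p * (s-a)^q) (Ioc 0 s) volume :=
        (Continuous.integrableOn_Ioc (by continuity))
      rw [hIoc, ← ofReal_integral_eq_lintegral_ofReal hint
        (Filter.Eventually.mono (ae_restrict_mem measurableSet_Ioc)
          (fun a ha => mul_nonneg (pow_nonneg ha.1.le _)
            (pow_nonneg (sub_nonneg.mpr ha.2) _)))]
      rw [← intervalIntegral.integral_of_le hs.le, hc s hs,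
        ENNReal.ofReal_mul hcnn, mul_assoc]
      congr 1
      rw [← mul_assoc, ← ENNReal.ofReal_mul (pow_nonneg hs.le _)]
  simp_rw [step2]
  rw [lintegral_indicator measurableSet_Ioi _, lintegral_const_mul']
  exact ENNReal.ofReal_ne_top

lemma sum_dens (hr : 0 < r) : ∀ (k : ℕ) (g : ℝ → ℝ≥0∞), Measurable g →
    ∫⁻ x : Fin (k+1) → ℝ, g (∑ i, x i) ∂(Measure.pi fun _ => expMeasure r)
      = ENNReal.ofReal (r^(k+1) / (Nat.factorial k))
          * ∫⁻ t in Ioi (0:ℝ), ENNReal.ofReal (t^k * Real.exp (-(r*t))) * g t := by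
  haveI : IsProbabilityMeasure (expMeasure r) := isProbabilityMeasure_expMeasure hr
  intro k
  induction k with
  | zero =>
    intro g hg
    have h1 : ∫⁻ x : Fin 1 → ℝ, g (∑ i, x i) ∂(Measure.pi fun _ => expMeasure r)
        = ∫⁻ a, g a ∂(expMeasure r) := by
      have hmp := measurePreserving_funUnique (β := ℝ) (expMeasure r) (Fin 1)
      rw [← hmp.lintegral_comp hg]
      exact lintegral_congr fun x => by simp [MeasurableEquiv.funUnique]
    rw [h1, exp_lint hr g hg, ← lintegral_const_mul' _ _ ENNReal.ofReal_ne_top]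
    refine setLIntegral_congr_fun measurableSet_Ioi
      (fun a (ha : 0 < a) => ?_)
    rw [← mul_assoc, ← ENNReal.ofReal_mul (by positivity)]
    norm_num [Nat.factorial]
  | succ k IH =>
    intro g hg
    set e := MeasurableEquiv.piFinSuccAbove (fun _ : Fin (k+2) => ℝ) 0 with he
    have hmp := measurePreserving_piFinSuccAbove (fun _ : Fin (k+2) => expMeasure r) 0
    have hFm : Measurable fun z : ℝ × (Fin (k+1) → ℝ) => g (z.1 + ∑ j, z.2 j) :=
      hg.comp (measurable_fst.add
        (Finset.measurable_sum _ fun j _ => (measurable_pi_apply j).comp measurable_snd))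
    have h1 : ∫⁻ x : Fin (k+2) → ℝ, g (∑ i, x i) ∂(Measure.pi fun _ => expMeasure r)
        = ∫⁻ a, ∫⁻ y : Fin (k+1) → ℝ, g (a + ∑ j, y j)
            ∂(Measure.pi fun _ => expMeasure r) ∂(expMeasure r) := by
      rw [← lintegral_prod _ hFm.aemeasurable, ← hmp.lintegral_comp hFm]
      exact lintegral_congr fun x => by rw [Fin.sum_univ_succAbove x 0]; rfl
    have h2 : ∀ a : ℝ, ∫⁻ y : Fin (k+1) → ℝ, g (a + ∑ j, y j)
          ∂(Measure.pi fun _ => expMeasure r)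
        = ENNReal.ofReal (r^(k+1) / (Nat.factorial k))
            * ∫⁻ t in Ioi (0:ℝ), ENNReal.ofReal (t^k * Real.exp (-(r*t))) * g (a+t) :=
      fun a => IH _ (hg.comp (measurable_const.add measurable_id))
    have hIm : Measurable fun a : ℝ =>
        ∫⁻ t in Ioi (0:ℝ), ENNReal.ofReal (t^k * Real.exp (-(r*t))) * g (a+t) := by
      apply Measurable.lintegral_prod_right
      exact (((measurable_snd.pow_const k).mul
        ((measurable_snd.const_mul r).neg.exp)).ennreal_ofReal).mul
        (hg.comp (measurable_fst.add measurable_snd))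
    simp_rw [h1, h2]
    rw [exp_lint hr (fun a => ENNReal.ofReal (r^(k+1) / (Nat.factorial k))
      * ∫⁻ t in Ioi (0:ℝ), ENNReal.ofReal (t^k * Real.exp (-(r*t))) * g (a+t))
      (((measurable_const (a := ENNReal.ofReal
      (r^(k+1) / (Nat.factorial k)))).mul hIm))]
    have h3 : ∀ a ∈ Ioi (0:ℝ),
        ENNReal.ofReal (r * Real.exp (-(r*a))) * (ENNReal.ofReal (r^(k+1) / (Nat.factorial k))
          * ∫⁻ t in Ioi (0:ℝ), ENNReal.ofReal (t^k * Real.exp (-(r*t))) * g (a+t))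
        = ENNReal.ofReal (r * (r^(k+1) / (Nat.factorial k)))
          * (ENNReal.ofReal (a^0 * Real.exp (-(r*a)))
            * ∫⁻ t in Ioi (0:ℝ), ENNReal.ofReal (t^k * Real.exp (-(r*t))) * g (a+t)) := by
      intro a ha
      rw [← mul_assoc, ← mul_assoc, ← ENNReal.ofReal_mul (by positivity),
        ← ENNReal.ofReal_mul (by positivity)]
      congr 2
      simp only [pow_zero, one_mul]
      ring
    rw [setLIntegral_congr_fun measurableSet_Ioi h3,
      lintegral_const_mul' _ _ ENNReal.ofReal_ne_top,
      conv_lemma hr 0 k (1/(k+1)) (fun s hs => ip0 s k hs) g hg,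
      ← mul_assoc, ← ENNReal.ofReal_mul (by positivity)]
    have : r * (r ^ (k + 1) / ↑(Nat.factorial k)) * (1 / (↑k + 1))
        = r ^ (k + 1 + 1) / ↑(Nat.factorial (k + 1)) := by
      rw [Nat.factorial_succ]
      have h1 : (Nat.factorial k : ℝ) ≠ 0 := Nat.cast_ne_zero.mpr (Nat.factorial_ne_zero k)
      have h2 : (k:ℝ) + 1 ≠ 0 := by positivity
      push_cast
      field_simp
      ring
    rw [this]
    norm_num

lemma wdens (hr : 0 < r) (k : ℕ) (i : Fin (k+1)) (g : ℝ → ℝ≥0∞) (hg : Measurable g) :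
    ∫⁻ x : Fin (k+1) → ℝ, ENNReal.ofReal ((x i)^2) * g (∑ j, x j)
        ∂(Measure.pi fun _ => expMeasure r)
      = ENNReal.ofReal (2 * r^(k+1) / (Nat.factorial (k+2)))
          * ∫⁻ t in Ioi (0:ℝ), ENNReal.ofReal (t^(k+2) * Real.exp (-(r*t))) * g t := by
  haveI : IsProbabilityMeasure (expMeasure r) := isProbabilityMeasure_expMeasure hr
  have hmp := measurePreserving_piFinSuccAbove (fun _ : Fin (k+1) => expMeasure r) i
  have hFm : Measurable fun z : ℝ × (Fin k → ℝ) =>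
      ENNReal.ofReal (z.1^2) * g (z.1 + ∑ j, z.2 j) :=
    ((measurable_fst.pow_const 2).ennreal_ofReal).mul (hg.comp (measurable_fst.add
      (Finset.measurable_sum _ fun j _ => (measurable_pi_apply j).comp measurable_snd)))
  have h1 : ∫⁻ x : Fin (k+1) → ℝ, ENNReal.ofReal ((x i)^2) * g (∑ j, x j)
        ∂(Measure.pi fun _ => expMeasure r)
      = ∫⁻ a, ∫⁻ y : Fin k → ℝ, ENNReal.ofReal (a^2) * g (a + ∑ j, y j)
          ∂(Measure.pi fun _ => expMeasure r) ∂(expMeasure r) := by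
    rw [← lintegral_prod _ hFm.aemeasurable, ← hmp.lintegral_comp hFm]
    exact lintegral_congr fun x => by rw [Fin.sum_univ_succAbove x i]; rfl
  rw [h1]
  cases k with
  | zero =>
    have h2 : ∀ a : ℝ, ∫⁻ y : Fin 0 → ℝ, ENNReal.ofReal (a^2) * g (a + ∑ j, y j)
          ∂(Measure.pi fun _ => expMeasure r)
        = ENNReal.ofReal (a^2) * g a := by
      intro a
      rw [Measure.pi_of_empty, lintegral_dirac]
      simp
    simp_rw [h2]
    have hsq : Measurable fun a : ℝ => ENNReal.ofReal (a^2) := by fun_prop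
    rw [exp_lint hr (fun a => ENNReal.ofReal (a^2) * g a) (hsq.mul hg),
      ← lintegral_const_mul' _ _ ENNReal.ofReal_ne_top]
    refine setLIntegral_congr_fun measurableSet_Ioi
      (fun a (ha : 0 < a) => ?_)
    rw [← mul_assoc, ← mul_assoc, ← ENNReal.ofReal_mul (by positivity),
      ← ENNReal.ofReal_mul (by positivity)]
    congr 2
    norm_num [Nat.factorial]
    ring
  | succ m =>
    have h2 : ∀ a : ℝ, ∫⁻ y : Fin (m+1) → ℝ, ENNReal.ofReal (a^2) * g (a + ∑ j, y j)
          ∂(Measure.pi fun _ => expMeasure r)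
        = ENNReal.ofReal (a^2) * (ENNReal.ofReal (r^(m+1) / (Nat.factorial m))
            * ∫⁻ t in Ioi (0:ℝ), ENNReal.ofReal (t^m * Real.exp (-(r*t))) * g (a+t)) := by
      intro a
      rw [lintegral_const_mul' _ _ ENNReal.ofReal_ne_top]
      congr 1
      exact sum_dens hr m (fun t => g (a+t)) (hg.comp (measurable_const.add measurable_id))
    have hIm : Measurable fun a : ℝ =>
        ∫⁻ t in Ioi (0:ℝ), ENNReal.ofReal (t^m * Real.exp (-(r*t))) * g (a+t) := by
      apply Measurable.lintegral_prod_right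
      exact (((measurable_snd.pow_const m).mul
        ((measurable_snd.const_mul r).neg.exp)).ennreal_ofReal).mul
        (hg.comp (measurable_fst.add measurable_snd))
    simp_rw [h2]
    have hsq : Measurable fun a : ℝ => ENNReal.ofReal (a^2) := by fun_prop
    rw [exp_lint hr (fun a => ENNReal.ofReal (a^2)
      * (ENNReal.ofReal (r^(m+1) / (Nat.factorial m))
        * ∫⁻ t in Ioi (0:ℝ), ENNReal.ofReal (t^m * Real.exp (-(r*t))) * g (a+t)))
      (hsq.mul (measurable_const.mul hIm))]
    have h3 : ∀ a ∈ Ioi (0:ℝ),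
        ENNReal.ofReal (r * Real.exp (-(r*a))) * (ENNReal.ofReal (a^2)
          * (ENNReal.ofReal (r^(m+1) / (Nat.factorial m))
            * ∫⁻ t in Ioi (0:ℝ), ENNReal.ofReal (t^m * Real.exp (-(r*t))) * g (a+t)))
        = ENNReal.ofReal (r * (r^(m+1) / (Nat.factorial m)))
          * (ENNReal.ofReal (a^2 * Real.exp (-(r*a)))
            * ∫⁻ t in Ioi (0:ℝ), ENNReal.ofReal (t^m * Real.exp (-(r*t))) * g (a+t)) := by
      intro a ha
      rw [← mul_assoc, ← mul_assoc, ← mul_assoc, ← ENNReal.ofReal_mul (by positivity),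
        ← ENNReal.ofReal_mul (by positivity), ← ENNReal.ofReal_mul (by positivity)]
      congr 2
      ring
    rw [setLIntegral_congr_fun measurableSet_Ioi h3,
      lintegral_const_mul' _ _ ENNReal.ofReal_ne_top,
      conv_lemma hr 2 m (2/((m+1)*(m+2)*(m+3))) (fun s hs => ip2 s m hs) g hg,
      ← mul_assoc, ← ENNReal.ofReal_mul (by positivity)]
    have harith : r * (r ^ (m + 1) / ↑(Nat.factorial m)) * (2/((m+1)*(m+2)*(m+3)))
        = 2 * r ^ (m + 1 + 1) / ↑(Nat.factorial (m + 1 + 2)) := by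
      have h1 : (Nat.factorial m : ℝ) ≠ 0 := Nat.cast_ne_zero.mpr (Nat.factorial_ne_zero m)
      have h2 : (m:ℝ) + 1 ≠ 0 := by positivity
      have h3 : (m:ℝ) + 2 ≠ 0 := by positivity
      have h4 : (m:ℝ) + 3 ≠ 0 := by positivity
      rw [show m + 1 + 2 = m + 3 by ring, Nat.factorial_succ, Nat.factorial_succ,
        Nat.factorial_succ]
      push_cast
      field_simp
      ring
    rw [harith, show 2 + m + 1 = m + 1 + 2 from by omega]

lemma fin_gamma (hr : 0 < r) (k : ℕ) :
    ∫⁻ t in Ioi (0:ℝ), ENNReal.ofReal (t^k * Real.exp (-(r*t))) ≠ ⊤ := by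
  haveI : IsProbabilityMeasure (expMeasure r) := isProbabilityMeasure_expMeasure hr
  have h := sum_dens hr k (fun _ => 1) measurable_const
  simp only [lintegral_one, measure_univ, mul_one] at h
  intro htop
  rw [htop, ENNReal.mul_top (by
    simp only [ne_eq, ENNReal.ofReal_eq_zero, not_le]
    positivity)] at h
  exact ENNReal.top_ne_one h.symm

lemma fin_gamma_g (hr : 0 < r) (k : ℕ) (g : ℝ → ℝ≥0∞) (hg1 : ∀ t, g t ≤ 1) :
    ∫⁻ t in Ioi (0:ℝ), ENNReal.ofReal (t^k * Real.exp (-(r*t))) * g t ≠ ⊤ := by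
  refine ne_top_of_le_ne_top (fin_gamma hr k) (lintegral_mono fun t => ?_)
  calc ENNReal.ofReal (t^k * Real.exp (-(r*t))) * g t
      ≤ ENNReal.ofReal (t^k * Real.exp (-(r*t))) * 1 := by
        exact mul_le_mul_right (hg1 t) _
    _ = _ := mul_one _

lemma alg_id (k : ℕ) (x : Fin (k+1) → ℝ) :
    (∑ i, (x i - (∑ j, x j)/((k:ℝ)+1))^2) + (∑ j, x j)^2/((k:ℝ)+1)
      = ∑ i, (x i)^2 := by
  have hk : ((k:ℝ)+1) ≠ 0 := by positivity
  have hcard : (Finset.univ : Finset (Fin (k+1))).card = k+1 := by simp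
  simp only [sub_sq]
  rw [Finset.sum_add_distrib, Finset.sum_sub_distrib, Finset.sum_const, hcard,
    nsmul_eq_mul]
  have hmid : ∑ i, 2 * x i * ((∑ j, x j)/((k:ℝ)+1))
      = 2 * ((∑ j, x j)/((k:ℝ)+1)) * (∑ j, x j) := by
    rw [← Finset.sum_mul, ← Finset.mul_sum]
    ring
  rw [hmid]
  push_cast
  field_simp
  ring

lemma main_pi (hr : 0 < r) (k : ℕ) (c : ℝ)
    (hc : c = (k:ℝ)/(((k:ℝ)+1)*((k:ℝ)+2)))
    (g : ℝ → ℝ≥0∞) (hg : Measurable g) (hg1 : ∀ t, g t ≤ 1) :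
    ∫⁻ x : Fin (k+1) → ℝ,
        ENNReal.ofReal (∑ i, (x i - (∑ j, x j)/((k:ℝ)+1))^2) * g (∑ j, x j)
        ∂(Measure.pi fun _ => expMeasure r)
      = ∫⁻ x : Fin (k+1) → ℝ, ENNReal.ofReal (c * (∑ j, x j)^2) * g (∑ j, x j)
          ∂(Measure.pi fun _ => expMeasure r) := by
  haveI : IsProbabilityMeasure (expMeasure r) := isProbabilityMeasure_expMeasure hr
  have hcnn : 0 ≤ c := by rw [hc]; positivity
  set μpi := (Measure.pi fun _ : Fin (k+1) => expMeasure r) with hμpi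
  set J := ∫⁻ t in Ioi (0:ℝ), ENNReal.ofReal (t^(k+2) * Real.exp (-(r*t))) * g t with hJ
  have hJne : J ≠ ⊤ := fin_gamma_g hr (k+2) g hg1
  have hsumm : Measurable fun x : Fin (k+1) → ℝ => ∑ j, x j :=
    Finset.measurable_sum _ fun j _ => measurable_pi_apply j
  have hFm : Measurable fun x : Fin (k+1) → ℝ =>
      ENNReal.ofReal (∑ i, (x i - (∑ j, x j)/((k:ℝ)+1))^2) := by
    apply Measurable.ennreal_ofReal
    exact Finset.measurable_sum _ fun i _ =>
      ((measurable_pi_apply i).sub (hsumm.div_const _)).pow_const 2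
  -- three computed integrals
  have hsq : ∫⁻ x : Fin (k+1) → ℝ, (∑ i, ENNReal.ofReal ((x i)^2)) * g (∑ j, x j) ∂μpi
      = ENNReal.ofReal (((k:ℝ)+1) * (2 * r^(k+1) / (Nat.factorial (k+2)))) * J := by
    have : ∀ x : Fin (k+1) → ℝ, (∑ i, ENNReal.ofReal ((x i)^2)) * g (∑ j, x j)
        = ∑ i, ENNReal.ofReal ((x i)^2) * g (∑ j, x j) := fun x => by
      rw [Finset.sum_mul]
    simp_rw [this]
    have hmeas' : ∀ i : Fin (k+1), Measurable fun x : Fin (k+1) → ℝ =>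
        ENNReal.ofReal ((x i)^2) * g (∑ j, x j) := fun i =>
      (((measurable_pi_apply i).pow_const 2).ennreal_ofReal).mul (hg.comp hsumm)
    rw [lintegral_finset_sum _ (fun i _ => hmeas' i)]
    have : ∀ i : Fin (k+1), ∫⁻ x : Fin (k+1) → ℝ,
        ENNReal.ofReal ((x i)^2) * g (∑ j, x j) ∂μpi
        = ENNReal.ofReal (2 * r^(k+1) / (Nat.factorial (k+2))) * J :=
      fun i => wdens hr k i g hg
    simp_rw [this, Finset.sum_const, Finset.card_univ, Fintype.card_fin, nsmul_eq_mul,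
      ← mul_assoc]
    congr 1
    rw [← ENNReal.ofReal_natCast (k+1), ← ENNReal.ofReal_mul (by positivity)]
    push_cast
    ring_nf
  have hmid : ∫⁻ x : Fin (k+1) → ℝ,
      ENNReal.ofReal ((∑ j, x j)^2/((k:ℝ)+1)) * g (∑ j, x j) ∂μpi
      = ENNReal.ofReal ((r^(k+1) / (Nat.factorial k)) * (1/((k:ℝ)+1))) * J := by
    have hgm : Measurable fun t : ℝ => ENNReal.ofReal (t^2/((k:ℝ)+1)) * g t := by
      fun_prop
    rw [sum_dens hr k (fun t => ENNReal.ofReal (t^2/((k:ℝ)+1)) * g t) hgm]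
    rw [ENNReal.ofReal_mul (by positivity), mul_assoc]
    congr 1
    rw [hJ, ← lintegral_const_mul' _ _ ENNReal.ofReal_ne_top]
    refine setLIntegral_congr_fun measurableSet_Ioi
      (fun t (ht : 0 < t) => ?_)
    rw [← mul_assoc, ← mul_assoc, ← ENNReal.ofReal_mul (by positivity),
      ← ENNReal.ofReal_mul (by positivity)]
    congr 2
    ring
  have hrhs : ∫⁻ x : Fin (k+1) → ℝ,
      ENNReal.ofReal (c * (∑ j, x j)^2) * g (∑ j, x j) ∂μpi
      = ENNReal.ofReal ((r^(k+1) / (Nat.factorial k)) * c) * J := by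
    have hgm : Measurable fun t : ℝ => ENNReal.ofReal (c * t^2) * g t := by fun_prop
    rw [sum_dens hr k (fun t => ENNReal.ofReal (c * t^2) * g t) hgm]
    rw [ENNReal.ofReal_mul (by positivity), mul_assoc]
    congr 1
    rw [hJ, ← lintegral_const_mul' _ _ ENNReal.ofReal_ne_top]
    refine setLIntegral_congr_fun measurableSet_Ioi
      (fun t (ht : 0 < t) => ?_)
    rw [← mul_assoc, ← mul_assoc, ← ENNReal.ofReal_mul (by positivity),
      ← ENNReal.ofReal_mul hcnn]
    congr 2
    ring
  -- the splitting identity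
  have hsplit : ∫⁻ x : Fin (k+1) → ℝ,
        ENNReal.ofReal (∑ i, (x i - (∑ j, x j)/((k:ℝ)+1))^2) * g (∑ j, x j) ∂μpi
      + ∫⁻ x : Fin (k+1) → ℝ,
          ENNReal.ofReal ((∑ j, x j)^2/((k:ℝ)+1)) * g (∑ j, x j) ∂μpi
      = ∫⁻ x : Fin (k+1) → ℝ, (∑ i, ENNReal.ofReal ((x i)^2)) * g (∑ j, x j) ∂μpi := by
    have hfg : Measurable fun x : Fin (k+1) → ℝ =>
        ENNReal.ofReal (∑ i, (x i - (∑ j, x j)/((k:ℝ)+1))^2) * g (∑ j, x j) :=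
      hFm.mul (hg.comp hsumm)
    rw [← lintegral_add_left hfg]
    refine lintegral_congr fun x => ?_
    rw [← add_mul]
    congr 1
    rw [← ENNReal.ofReal_sum_of_nonneg (fun i _ => sq_nonneg _),
      ← ENNReal.ofReal_add (Finset.sum_nonneg fun i _ => sq_nonneg _)
        (div_nonneg (sq_nonneg _) (by positivity)), alg_id k x]
  rw [hsq, hmid] at hsplit
  rw [hrhs]
  -- arithmetic: α = γ + β
  have harith : ((k:ℝ)+1) * (2 * r^(k+1) / (Nat.factorial (k+2)))
      = (r^(k+1) / (Nat.factorial k)) * c + (r^(k+1) / (Nat.factorial k)) * (1/((k:ℝ)+1)) := by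
    rw [hc, show k + 2 = (k+1)+1 from rfl, Nat.factorial_succ, Nat.factorial_succ]
    have h1 : (Nat.factorial k : ℝ) ≠ 0 := Nat.cast_ne_zero.mpr (Nat.factorial_ne_zero k)
    have h2 : (k:ℝ) + 1 ≠ 0 := by positivity
    have h3 : (k:ℝ) + 2 ≠ 0 := by positivity
    push_cast
    field_simp
    ring
  rw [harith, ENNReal.ofReal_add (by positivity) (by positivity), add_mul] at hsplit
  have hβ : ENNReal.ofReal ((r^(k+1) / (Nat.factorial k)) * (1/((k:ℝ)+1))) * J ≠ ⊤ :=
    ENNReal.mul_ne_top ENNReal.ofReal_ne_top hJne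
  exact WithTop.add_right_cancel hβ hsplit

/-- For i.i.d. exponential random variables with mean `lam > 0`, the conditional
expectation of the sum of squared deviations `S²` given the σ-algebra generated by the
sample total `T` satisfies `E[S² | T] = ((n - 1)/(n(n + 1))) T²` almost surely. -/
theorem condexp_sum_sq_dev_given_total_of_iid_exponential
    {Ω : Type*} [MeasurableSpace Ω] (P : Measure Ω) [IsProbabilityMeasure P]
    (n : ℕ) (hn : 1 ≤ n) (lam : ℝ) (hlam : 0 < lam)
    (X : Fin n → Ω → ℝ) (hmeas : ∀ i, Measurable (X i))
    (hindep : iIndepFun X P)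
    (hdist : ∀ i, Measure.map (X i) P = expMeasure lam⁻¹) :
    P[(fun ω => ∑ i, (X i ω - (∑ j, X j ω) / n) ^ 2) |
        MeasurableSpace.comap (fun ω => ∑ i, X i ω) inferInstance] =ᵐ[P]
      fun ω => ((n : ℝ) - 1) / (n * ((n : ℝ) + 1)) * (∑ i, X i ω) ^ 2 := by
  obtain ⟨k, rfl⟩ : ∃ k, n = k + 1 := ⟨n - 1, (Nat.succ_pred_eq_of_pos hn).symm⟩
  set r : ℝ := lam⁻¹ with hrdef
  have hr : 0 < r := inv_pos.mpr hlam
  haveI : IsProbabilityMeasure (expMeasure r) := isProbabilityMeasure_expMeasure hr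
  -- notation
  set nR : ℝ := ((k+1 : ℕ) : ℝ) with hnR
  have hnR' : nR = (k:ℝ) + 1 := by push_cast [hnR]; ring
  set c : ℝ := (nR - 1) / (nR * (nR + 1)) with hc
  have hc' : c = (k:ℝ)/(((k:ℝ)+1)*((k:ℝ)+2)) := by
    rw [hc, hnR']; ring_nf
  have hcnn : 0 ≤ c := by rw [hc']; positivity
  set T : Ω → ℝ := fun ω => ∑ i, X i ω with hT
  have hTm : Measurable T := Finset.measurable_sum _ fun i _ => hmeas i
  set φ : Ω → (Fin (k+1) → ℝ) := fun ω i => X i ω with hφdef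
  have hφ : Measurable φ := measurable_pi_lambda _ hmeas
  set sumF : (Fin (k+1) → ℝ) → ℝ := fun x => ∑ i, x i with hsumF
  have hsumm : Measurable sumF := Finset.measurable_sum _ fun i _ => measurable_pi_apply i
  set μpi : Measure (Fin (k+1) → ℝ) := Measure.pi (fun _ => expMeasure r) with hμpi
  -- joint law is the product measure
  have hmapφ : Measure.map φ P = μpi := by
    rw [hμpi]
    refine (Measure.pi_eq (μ := fun _ : Fin (k+1) => expMeasure r) fun s hs => ?_).symm
    rw [Measure.map_apply hφ (MeasurableSet.univ_pi hs)]
    have hpre : φ ⁻¹' (Set.univ.pi s) = ⋂ i ∈ Finset.univ, X i ⁻¹' s i := by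
      ext ω; simp [Set.mem_pi, hφdef]
    rw [hpre, hindep.measure_inter_preimage_eq_mul Finset.univ (fun i _ => hs i)]
    refine Finset.prod_congr rfl fun i _ => ?_
    rw [← Measure.map_apply (hmeas i) (hs i), hdist i]
  -- functions
  set F : (Fin (k+1) → ℝ) → ℝ := fun x => ∑ i, (x i - (∑ j, x j)/nR)^2 with hF
  have hFm : Measurable fun x => ENNReal.ofReal (F x) := by
    apply Measurable.ennreal_ofReal
    exact Finset.measurable_sum _ fun i _ =>
      ((measurable_pi_apply i).sub (hsumm.div_const _)).pow_const 2
  have hFnn : ∀ x, 0 ≤ F x := fun x => Finset.sum_nonneg fun i _ => sq_nonneg _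
  set Sfun : Ω → ℝ := fun ω => ∑ i, (X i ω - (∑ j, X j ω) / nR) ^ 2 with hSfun
  have hSm : Measurable Sfun := Finset.measurable_sum _ fun i _ =>
    ((hmeas i).sub (hTm.div_const _)).pow_const 2
  have hSc : ∀ ω, Sfun ω = F (φ ω) := fun ω => rfl
  set gfun : Ω → ℝ := fun ω => c * (T ω)^2 with hgfun
  have hgm0 : Measurable gfun := (hTm.pow_const 2).const_mul c
  -- finiteness of ∫⁻ ofReal (F x)
  have hFineq : ∀ x : Fin (k+1) → ℝ,
      ENNReal.ofReal (F x) ≤ ∑ i, ENNReal.ofReal ((x i)^2) := by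
    intro x
    rw [← ENNReal.ofReal_sum_of_nonneg (fun i _ => sq_nonneg _)]
    apply ENNReal.ofReal_le_ofReal
    rw [← alg_id k x, ← hnR']
    have : 0 ≤ (∑ j, x j)^2/nR := by
      rw [hnR']; positivity
    linarith
  have hsum_fin : ∫⁻ x, (∑ i, ENNReal.ofReal ((x i)^2)) ∂μpi ≠ ⊤ := by
    rw [lintegral_finset_sum _ (fun i _ => ((measurable_pi_apply i).pow_const 2).ennreal_ofReal)]
    refine (ENNReal.sum_ne_top).mpr fun i _ => ?_
    have h := wdens hr k i (fun _ => 1) measurable_const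
    simp only [mul_one] at h
    rw [h]
    exact ENNReal.mul_ne_top ENNReal.ofReal_ne_top (fin_gamma hr (k+2))
  have hFfin : ∫⁻ x, ENNReal.ofReal (F x) ∂μpi ≠ ⊤ :=
    ne_top_of_le_ne_top hsum_fin (lintegral_mono hFineq)
  -- conditional expectation setup
  have hm : MeasurableSpace.comap T inferInstance ≤ (by infer_instance : MeasurableSpace Ω) :=
    hTm.comap_le
  haveI : IsFiniteMeasure (P.trim hm) := isFiniteMeasure_trim hm
  -- integrability of Sfun
  have hf : Integrable Sfun P := by
    constructor
    · exact hSm.aestronglyMeasurable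
    · rw [hasFiniteIntegral_iff_ofReal (Filter.Eventually.of_forall fun ω =>
        Finset.sum_nonneg fun i _ => sq_nonneg _)]
      have : ∫⁻ ω, ENNReal.ofReal (Sfun ω) ∂P = ∫⁻ x, ENNReal.ofReal (F x) ∂μpi := by
        rw [← hmapφ, lintegral_map hFm hφ]
      rw [this]
      exact lt_top_iff_ne_top.mpr hFfin
  -- integrability of gfun
  have hgfin : ∫⁻ x, ENNReal.ofReal (c * (sumF x)^2) ∂μpi ≠ ⊤ := by
    have h := main_pi hr k c hc' (fun _ => 1) measurable_const (fun t => le_rfl)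
    simp only [mul_one, ← hnR', ← hF, ← hsumF] at h
    rw [← h]
    exact hFfin
  have hg : Integrable gfun P := by
    constructor
    · exact hgm0.aestronglyMeasurable
    · rw [hasFiniteIntegral_iff_ofReal (Filter.Eventually.of_forall fun ω =>
        mul_nonneg hcnn (sq_nonneg _))]
      have hgfm : Measurable fun x : Fin (k+1) → ℝ => ENNReal.ofReal (c * (sumF x)^2) :=
        ((hsumm.pow_const 2).const_mul c).ennreal_ofReal
      have : ∫⁻ ω, ENNReal.ofReal (gfun ω) ∂P
          = ∫⁻ x, ENNReal.ofReal (c * (sumF x)^2) ∂μpi := by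
        rw [← hmapφ, lintegral_map hgfm hφ]
      rw [this]
      exact lt_top_iff_ne_top.mpr hgfin
  -- main application
  have main := ae_eq_condExp_of_forall_setIntegral_eq (μ := P) hm hf
    (fun s _ _ => hg.integrableOn)
    ?_ ?_
  · exact main.symm
  · -- set integral equality
    rintro s ⟨B, hB, rfl⟩ _
    have hpre : T ⁻¹' B = φ ⁻¹' (sumF ⁻¹' B) := rfl
    set gB : ℝ → ℝ≥0∞ := B.indicator (fun _ => 1) with hgB
    have hgBm : Measurable gB := measurable_const.indicator hB
    have hgB1 : ∀ t, gB t ≤ 1 := fun t => Set.indicator_le (fun _ _ => le_rfl) t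
    -- transfer + indicator, for both integrands
    have key : ∀ (H : (Fin (k+1) → ℝ) → ℝ≥0∞), Measurable H →
        ∫⁻ ω in T ⁻¹' B, H (φ ω) ∂P = ∫⁻ x, H x * gB (sumF x) ∂μpi := by
      intro H hH
      rw [hpre, ← setLIntegral_map (hsumm hB) hH hφ, hmapφ,
        ← lintegral_indicator (hsumm hB)]
      refine lintegral_congr fun x => ?_
      by_cases hx : sumF x ∈ B
      · rw [Set.indicator_of_mem (by exact hx), hgB, Set.indicator_of_mem hx, mul_one]
      · rw [Set.indicator_of_notMem (by exact hx), hgB, Set.indicator_of_notMem hx,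
          mul_zero]
    have hgfm : Measurable fun x : Fin (k+1) → ℝ => ENNReal.ofReal (c * (sumF x)^2) :=
      ((hsumm.pow_const 2).const_mul c).ennreal_ofReal
    have hLeq : ∫⁻ ω in T ⁻¹' B, ENNReal.ofReal (Sfun ω) ∂P
        = ∫⁻ ω in T ⁻¹' B, ENNReal.ofReal (gfun ω) ∂P := by
      have e1 : ∫⁻ ω in T ⁻¹' B, ENNReal.ofReal (Sfun ω) ∂P
          = ∫⁻ x, ENNReal.ofReal (F x) * gB (sumF x) ∂μpi :=
        key (fun x => ENNReal.ofReal (F x)) hFm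
      have e2 : ∫⁻ ω in T ⁻¹' B, ENNReal.ofReal (gfun ω) ∂P
          = ∫⁻ x, ENNReal.ofReal (c * (sumF x)^2) * gB (sumF x) ∂μpi :=
        key (fun x => ENNReal.ofReal (c * (sumF x)^2)) hgfm
      rw [e1, e2]
      have h := main_pi hr k c hc' gB hgBm hgB1
      simp only [← hnR'] at h
      exact h
    have hint1 : ∫ x in T ⁻¹' B, Sfun x ∂P
        = (∫⁻ ω in T ⁻¹' B, ENNReal.ofReal (Sfun ω) ∂P).toReal :=
      integral_eq_lintegral_of_nonneg_ae
        (Filter.Eventually.of_forall fun ω => Finset.sum_nonneg fun i _ => sq_nonneg _)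
        hSm.aestronglyMeasurable.restrict
    have hint2 : ∫ x in T ⁻¹' B, gfun x ∂P
        = (∫⁻ ω in T ⁻¹' B, ENNReal.ofReal (gfun ω) ∂P).toReal :=
      integral_eq_lintegral_of_nonneg_ae
        (Filter.Eventually.of_forall fun ω => mul_nonneg hcnn (sq_nonneg _))
        hgm0.aestronglyMeasurable.restrict
    rw [hint1, hint2, hLeq]
  · -- strongly measurable
    have hTm' : Measurable[MeasurableSpace.comap T inferInstance] T :=
      Measurable.of_comap_le le_rfl
    have hreal : Measurable fun t : ℝ => c * t^2 := by fun_prop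
    exact (Measurable.stronglyMeasurable (hreal.comp hTm')).aestronglyMeasurable
end

section
/- Let n ≥ 1 and let X₁,…,Xₙ be i.i.d. exponential random variables with mean λ > 0. Then the variance ratio test statistic D = Σᵢ (Xᵢ − X̄)² / X̄² satisfies E[D] = n(n − 1)/(n + 1); in particular E[D] does not depend on λ. -/
open MeasureTheory ProbabilityTheory Filter

open MeasureTheory ProbabilityTheory Filter Real Set
open scoped ENNReal Topology



lemma aux_lintegral_pi {n : ℕ} (μ : Fin n → Measure ℝ) [∀ i, SigmaFinite (μ i)]
    (f : Fin n → ℝ → ℝ≥0∞) (hf : ∀ i, Measurable (f i)) :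
    ∫⁻ x, ∏ i, f i (x i) ∂Measure.pi μ = ∏ i, ∫⁻ y, f i y ∂(μ i) := by
  induction n with
  | zero => simp [lintegral_const, Measure.pi_univ]
  | succ m ih =>
    have hmp := measurePreserving_piFinSuccAbove μ 0
    have hG : Measurable (fun x : Fin m → ℝ => ∏ j : Fin m, f (Fin.succ j) (x j)) :=
      Finset.measurable_prod _ fun j _ => (hf _).comp (measurable_pi_apply j)
    have hmeas : Measurable (fun p : ℝ × (Fin m → ℝ) =>
        f 0 p.1 * ∏ j : Fin m, f (Fin.succ j) (p.2 j)) :=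
      ((hf 0).comp measurable_fst).mul (hG.comp measurable_snd)
    calc ∫⁻ x, ∏ i, f i (x i) ∂Measure.pi μ
        = ∫⁻ p : ℝ × (Fin m → ℝ), f 0 p.1 * ∏ j : Fin m, f (Fin.succ j) (p.2 j)
            ∂((μ 0).prod (Measure.pi fun j => μ (Fin.succAbove 0 j))) := by
          rw [← hmp.lintegral_comp hmeas]
          refine lintegral_congr fun x => ?_
          simp [MeasurableEquiv.piFinSuccAbove, Fin.prod_univ_succ, Fin.zero_succAbove, Fin.tail]
      _ = (∫⁻ y, f 0 y ∂μ 0) * ∫⁻ x, ∏ j : Fin m, f (Fin.succ j) (x j)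
            ∂(Measure.pi fun j => μ (Fin.succAbove 0 j)) :=
          lintegral_prod_mul (hf 0).aemeasurable hG.aemeasurable
      _ = ∏ i, ∫⁻ y, f i y ∂(μ i) := by
          have := ih (fun j => μ (Fin.succ j)) (fun j => f (Fin.succ j)) (fun j => hf _)
          simp only [Fin.zero_succAbove]
          rw [this, Fin.prod_univ_succ]


lemma aux_joint_eq_pi {Ω : Type*} [MeasurableSpace Ω] (P : Measure Ω) [IsProbabilityMeasure P]
    {n : ℕ} (X : Fin n → Ω → ℝ) (hmeas : ∀ i, Measurable (X i))
    (hindep : iIndepFun X P) {μ : Measure ℝ} [IsProbabilityMeasure μ]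
    (hdist : ∀ i, Measure.map (X i) P = μ) :
    Measure.map (fun ω i => X i ω) P = Measure.pi (fun _ => μ) := by
  refine (Measure.pi_eq (μ := fun _ : Fin n => μ) fun s hs => ?_).symm
  rw [Measure.map_apply (measurable_pi_lambda _ hmeas) (MeasurableSet.univ_pi hs)]
  have hpre : (fun ω i => X i ω) ⁻¹' (Set.pi univ s) = ⋂ i ∈ Finset.univ, X i ⁻¹' s i := by
    ext ω; simp [Set.mem_pi]
  rw [hpre, hindep.measure_inter_preimage_eq_mul Finset.univ (fun i _ => hs i)]
  refine Finset.prod_congr rfl fun i _ => ?_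
  rw [← hdist i, Measure.map_apply (hmeas i) (hs i)]


lemma aux_exp_moment0 {r t : ℝ} (hr : 0 < r) (ht : 0 ≤ t) :
    ∫⁻ y, ENNReal.ofReal (exp (-(t * y))) ∂expMeasure r = ENNReal.ofReal (r / (r + t)) := by
  have hrt : 0 < r + t := by linarith
  have hm : Measurable (gammaPDF 1 r) := (measurable_gammaPDFReal 1 r).ennreal_ofReal
  rw [expMeasure, gammaMeasure,
    lintegral_withDensity_eq_lintegral_mul _ hm
      (by fun_prop : Measurable fun y : ℝ => ENNReal.ofReal (exp (-(t * y))))]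
  have hpt : ∀ y : ℝ, (gammaPDF 1 r * fun y => ENNReal.ofReal (exp (-(t * y)))) y
      = ENNReal.ofReal (r / (r + t)) * gammaPDF 1 (r + t) y := by
    intro y
    rcases le_or_gt 0 y with hy | hy
    · simp only [Pi.mul_apply, gammaPDF, gammaPDFReal, if_pos hy]
      rw [← ENNReal.ofReal_mul (by positivity), ← ENNReal.ofReal_mul (by positivity)]
      congr 1
      rw [Real.rpow_one, Real.rpow_one]
      simp only [Real.Gamma_one, div_one]
      have hsplit : rexp (-((r + t) * y)) = rexp (-(r * y)) * rexp (-(t * y)) := by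
        rw [← Real.exp_add]; ring_nf
      rw [hsplit]
      field_simp
    · simp [Pi.mul_apply, gammaPDF_of_neg hy]
  simp_rw [hpt]
  have hm2 : Measurable (gammaPDF 1 (r + t)) := (measurable_gammaPDFReal _ _).ennreal_ofReal
  rw [lintegral_const_mul _ hm2, lintegral_gammaPDF_eq_one zero_lt_one hrt, mul_one]

lemma aux_exp_moment2 {r t : ℝ} (hr : 0 < r) (ht : 0 ≤ t) :
    ∫⁻ y, ENNReal.ofReal (y ^ 2 * exp (-(t * y))) ∂expMeasure r
      = ENNReal.ofReal (2 * r / (r + t) ^ 3) := by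
  have hrt : 0 < r + t := by linarith
  have hG3 : Real.Gamma 3 = 2 := by
    have := Real.Gamma_nat_eq_factorial 2
    norm_num at this
    convert this using 2 <;> norm_num
  have hm : Measurable (gammaPDF 1 r) := (measurable_gammaPDFReal 1 r).ennreal_ofReal
  rw [expMeasure, gammaMeasure,
    lintegral_withDensity_eq_lintegral_mul _ hm
      (by fun_prop : Measurable fun y : ℝ => ENNReal.ofReal (y ^ 2 * exp (-(t * y))))]
  have hpt : ∀ y : ℝ, (gammaPDF 1 r * fun y => ENNReal.ofReal (y ^ 2 * exp (-(t * y)))) y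
      = ENNReal.ofReal (2 * r / (r + t) ^ 3) * gammaPDF 3 (r + t) y := by
    intro y
    rcases le_or_gt 0 y with hy | hy
    · simp only [Pi.mul_apply, gammaPDF, gammaPDFReal, if_pos hy]
      rw [← ENNReal.ofReal_mul (by positivity)]
      rw [← ENNReal.ofReal_mul (by positivity)]
      congr 1
      rw [Real.rpow_one, hG3]
      simp only [Real.Gamma_one, div_one]
      have h2 : y ^ ((3:ℝ) - 1) = y ^ 2 := by
        rw [show (3:ℝ) - 1 = ((2:ℕ):ℝ) by norm_num, Real.rpow_natCast]
      have hsplit : rexp (-((r + t) * y)) = rexp (-(r * y)) * rexp (-(t * y)) := by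
        rw [← Real.exp_add]; ring_nf
      have h4 : (r + t) ^ (3:ℝ) = (r + t) ^ (3:ℕ) := by
        rw [show (3:ℝ) = ((3:ℕ):ℝ) by norm_num, Real.rpow_natCast]
      rw [h2, hsplit, show (1:ℝ) - 1 = 0 by norm_num, Real.rpow_zero, h4]
      have h3 : (r + t) ^ 3 ≠ 0 := by positivity
      field_simp
    · simp [Pi.mul_apply, gammaPDF_of_neg hy]
  simp_rw [hpt]
  have hm3 : Measurable (gammaPDF 3 (r + t)) := (measurable_gammaPDFReal _ _).ennreal_ofReal
  rw [lintegral_const_mul _ hm3, lintegral_gammaPDF_eq_one (by norm_num) hrt, mul_one]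


lemma aux_laplace_deriv {S : ℝ} (hS : 0 < S) (t : ℝ) :
    HasDerivAt (fun u : ℝ => -(u / S) * exp (-(S * u)) - S⁻¹ ^ 2 * exp (-(S * u)))
      (t * exp (-(S * t))) t := by
  have he : HasDerivAt (fun u : ℝ => exp (-(S * u))) (-S * exp (-(S * t))) t := by
    have h1 : HasDerivAt (fun u : ℝ => -(S * u)) (-S) t := by
      have := ((hasDerivAt_id t).const_mul S).neg; simp at this; exact this
    simpa [mul_comm] using h1.exp
  have h2 : HasDerivAt (fun u : ℝ => -(u / S)) (-(1 / S)) t := by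
    have := ((hasDerivAt_id t).div_const S).neg; simp [neg_div] at this ⊢; exact this
  have h3 := (h2.mul he)
  have h4 := he.const_mul (S⁻¹ ^ 2)
  refine (h3.sub h4).congr_deriv ?_
  field_simp
  ring

lemma aux_laplace {S : ℝ} (hS : 0 < S) :
    ∫⁻ t in Ioi (0:ℝ), ENNReal.ofReal (t * exp (-(S * t))) = ENNReal.ofReal (S⁻¹ ^ 2) := by
  set F : ℝ → ℝ := fun u => -(u / S) * exp (-(S * u)) - S⁻¹ ^ 2 * exp (-(S * u)) with hF
  have hderiv : ∀ t ∈ Ici (0:ℝ), HasDerivAt F (t * exp (-(S * t))) t :=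
    fun t _ => aux_laplace_deriv hS t
  have hpos : ∀ t ∈ Ioi (0:ℝ), 0 ≤ t * exp (-(S * t)) := fun t ht => by
    have := le_of_lt ht.out; positivity
  have htends : Tendsto F atTop (𝓝 0) := by
    have hst : Tendsto (fun u : ℝ => S * u) atTop atTop :=
      Tendsto.const_mul_atTop hS tendsto_id
    have hbase : Tendsto (fun x : ℝ => x * exp (-x)) atTop (𝓝 0) := by
      simpa using Real.tendsto_pow_mul_exp_neg_atTop_nhds_zero 1
    have h1 : Tendsto (fun u : ℝ => (S * u) * exp (-(S * u))) atTop (𝓝 0) := hbase.comp hst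
    have h2 : Tendsto (fun u : ℝ => exp (-(S * u))) atTop (𝓝 0) := by
      have : Tendsto (fun x : ℝ => exp (-x)) atTop (𝓝 0) := by
        simpa using Real.tendsto_exp_neg_atTop_nhds_zero
      exact this.comp hst
    have heq : F = fun u => (-(1 / S) * S⁻¹) * ((S * u) * exp (-(S * u)))
        - S⁻¹ ^ 2 * exp (-(S * u)) := by
      funext u; simp only [hF]; field_simp
    rw [heq]
    have := (h1.const_mul (-(1 / S) * S⁻¹)).sub (h2.const_mul (S⁻¹ ^ 2))
    simpa using this
  have hint := integral_Ioi_of_hasDerivAt_of_nonneg' hderiv hpos htends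
  have hIntOn : IntegrableOn (fun t => t * exp (-(S * t))) (Ioi (0:ℝ)) :=
    integrableOn_Ioi_deriv_of_nonneg' hderiv hpos htends
  rw [← ofReal_integral_eq_lintegral_ofReal hIntOn
    ((ae_restrict_iff' measurableSet_Ioi).2 (ae_of_all _ hpos))]
  rw [hint]
  congr 1
  simp only [hF]
  simp [Real.exp_zero]


lemma aux_zpow_deriv {r : ℝ} (hr : 0 < r) {n : ℕ} (hn : 1 ≤ n) {t : ℝ} (ht : 0 ≤ t) :
    HasDerivAt (fun u : ℝ => (-(1:ℝ) / n) * (r + u) ^ (-(n:ℤ)) +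
        (r / (n + 1)) * (r + u) ^ (-(n:ℤ) - 1))
      (t * (r + t) ^ (-(n:ℤ) - 2)) t := by
  have hrt : (0:ℝ) < r + t := by linarith
  have hne : r + t ≠ 0 := ne_of_gt hrt
  have hbase : HasDerivAt (fun u : ℝ => r + u) 1 t := (hasDerivAt_id t).const_add r
  have h1 : HasDerivAt (fun u : ℝ => (r + u) ^ (-(n:ℤ)))
      (-(n:ℝ) * (r + t) ^ (-(n:ℤ) - 1)) t := by
    have := (hasDerivAt_zpow (-(n:ℤ)) (r + t) (Or.inl hne)).comp t hbase
    simpa [Function.comp_def] using this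
  have h2 : HasDerivAt (fun u : ℝ => (r + u) ^ (-(n:ℤ) - 1))
      ((-(n:ℝ) - 1) * (r + t) ^ (-(n:ℤ) - 1 - 1)) t := by
    have := (hasDerivAt_zpow (-(n:ℤ) - 1) (r + t) (Or.inl hne)).comp t hbase
    simpa [Function.comp_def] using this
  have h := (h1.const_mul (-(1:ℝ) / n)).add (h2.const_mul (r / (n + 1)))
  refine h.congr_deriv ?_
  have hn0 : (n:ℝ) ≠ 0 := Nat.cast_ne_zero.mpr (by omega)
  have hn1 : (n:ℝ) + 1 ≠ 0 := by positivity
  have e1 : (r + t) ^ (-(n:ℤ) - 1) = (r + t) * (r + t) ^ (-(n:ℤ) - 2) := by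
    rw [show (-(n:ℤ) - 1) = (-(n:ℤ) - 2) + 1 by ring, zpow_add_one₀ hne, mul_comm]
  have e2 : (-(n:ℤ) - 1 - 1) = (-(n:ℤ) - 2) := by ring
  rw [e2, e1]
  push_cast
  field_simp
  ring

lemma aux_tint {r : ℝ} (hr : 0 < r) {n : ℕ} (hn : 1 ≤ n) :
    ∫⁻ t in Ioi (0:ℝ), ENNReal.ofReal (t * (r + t) ^ (-(n:ℤ) - 2))
      = ENNReal.ofReal (r ^ (-(n:ℤ)) / (n * (n + 1))) := by
  set F : ℝ → ℝ := fun u => (-(1:ℝ) / n) * (r + u) ^ (-(n:ℤ)) +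
      (r / (n + 1)) * (r + u) ^ (-(n:ℤ) - 1) with hF
  have hderiv : ∀ t ∈ Ici (0:ℝ), HasDerivAt F (t * (r + t) ^ (-(n:ℤ) - 2)) t :=
    fun t ht => aux_zpow_deriv hr hn ht.out
  have hpos : ∀ t ∈ Ioi (0:ℝ), 0 ≤ t * (r + t) ^ (-(n:ℤ) - 2) := fun t ht => by
    have h1 : (0:ℝ) < t := ht.out
    have h2 : (0:ℝ) < r + t := by linarith
    positivity
  have htends : Tendsto F atTop (𝓝 0) := by
    have hrt : Tendsto (fun u : ℝ => r + u) atTop atTop :=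
      tendsto_atTop_add_const_left _ r tendsto_id
    have h1 : Tendsto (fun u : ℝ => (r + u) ^ (-(n:ℤ))) atTop (𝓝 0) :=
      (tendsto_zpow_atTop_zero (by omega)).comp hrt
    have h2 : Tendsto (fun u : ℝ => (r + u) ^ (-(n:ℤ) - 1)) atTop (𝓝 0) :=
      (tendsto_zpow_atTop_zero (by omega)).comp hrt
    have h3 := (h1.const_mul (-(1:ℝ) / n)).add (h2.const_mul (r / (n + 1)))
    rw [show (-(1:ℝ) / n * 0 + r / (n + 1) * 0) = 0 by ring] at h3
    exact h3
  have hint := integral_Ioi_of_hasDerivAt_of_nonneg' hderiv hpos htends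
  have hIntOn : IntegrableOn (fun t => t * (r + t) ^ (-(n:ℤ) - 2)) (Ioi (0:ℝ)) :=
    integrableOn_Ioi_deriv_of_nonneg' hderiv hpos htends
  rw [← ofReal_integral_eq_lintegral_ofReal hIntOn
    ((ae_restrict_iff' measurableSet_Ioi).2 (ae_of_all _ hpos))]
  rw [hint]
  congr 1
  have hn0 : (n:ℝ) ≠ 0 := Nat.cast_ne_zero.mpr (by omega)
  have hn1 : (n:ℝ) + 1 ≠ 0 := by positivity
  have hrne : r ≠ 0 := ne_of_gt hr
  simp only [hF, add_zero]
  have e1 : r ^ (-(n:ℤ) - 1) = r ^ (-(n:ℤ)) * r⁻¹ := by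
    rw [zpow_sub_one₀ hrne]
  rw [e1]
  field_simp
  ring


lemma aux_ofReal_prod {α : Type*} (s : Finset α) (g : α → ℝ) (h : ∀ j ∈ s, 0 ≤ g j) :
    ENNReal.ofReal (∏ j ∈ s, g j) = ∏ j ∈ s, ENNReal.ofReal (g j) := by
  induction s using Finset.cons_induction with
  | empty => simp
  | cons a s ha ih =>
    rw [Finset.prod_cons, Finset.prod_cons, ENNReal.ofReal_mul (h a (Finset.mem_cons_self a s)),
      ih (fun j hj => h j (Finset.mem_cons_of_mem hj))]

lemma aux_inner {r t : ℝ} (hr : 0 < r) (ht : 0 < t) {n : ℕ} (i : Fin n) :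
    ∫⁻ x : Fin n → ℝ, ENNReal.ofReal ((x i) ^ 2 * (t * exp (-((∑ j, x j) * t))))
      ∂(Measure.pi fun _ : Fin n => expMeasure r)
    = ENNReal.ofReal (t * (2 * r / (r + t) ^ 3) * (r / (r + t)) ^ (n - 1)) := by
  haveI : IsProbabilityMeasure (expMeasure r) := isProbabilityMeasure_gammaMeasure zero_lt_one hr
  set h : Fin n → ℝ → ℝ := fun j y => (if j = i then y ^ 2 else 1) * exp (-(t * y)) with hh
  have hnn : ∀ j y, 0 ≤ h j y := fun j y => by
    rcases eq_or_ne j i with hj | hj <;> simp [hh, hj] <;> positivity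
  have hmeas : ∀ j, Measurable fun y => ENNReal.ofReal (h j y) := fun j => by
    rcases eq_or_ne j i with hj | hj <;> simp only [hh, hj, if_pos, if_neg, ite_true,
      ite_false] <;> fun_prop
  have hpt : ∀ x : Fin n → ℝ, ENNReal.ofReal ((x i) ^ 2 * (t * exp (-((∑ j, x j) * t))))
      = ENNReal.ofReal t * ∏ j, ENNReal.ofReal (h j (x j)) := by
    intro x
    have hreal : (x i) ^ 2 * (t * exp (-((∑ j, x j) * t))) = t * ∏ j, h j (x j) := by
      simp only [hh]
      rw [Finset.prod_mul_distrib, Finset.prod_ite_eq' Finset.univ i (fun j => (x j) ^ 2),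
        ← Real.exp_sum]
      simp only [Finset.mem_univ, if_pos, ite_true]
      have hsum : ∑ j, -(t * x j) = -((∑ j, x j) * t) := by
        rw [Finset.sum_neg_distrib]
        congr 1
        rw [Finset.sum_mul]
        exact Finset.sum_congr rfl fun j _ => (mul_comm _ _)
      rw [hsum]
      ring
    rw [hreal, ENNReal.ofReal_mul ht.le, aux_ofReal_prod _ _ (fun j _ => hnn j (x j))]
  simp_rw [hpt]
  have hprodmeas : Measurable fun x : Fin n → ℝ => ∏ j, ENNReal.ofReal (h j (x j)) :=
    Finset.measurable_prod _ fun j _ => (hmeas j).comp (measurable_pi_apply j)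
  rw [lintegral_const_mul _ hprodmeas]
  rw [aux_lintegral_pi _ _ hmeas]
  rw [← Finset.mul_prod_erase Finset.univ _ (Finset.mem_univ i)]
  have hi : ∫⁻ y, ENNReal.ofReal (h i y) ∂expMeasure r = ENNReal.ofReal (2 * r / (r + t) ^ 3) := by
    simp only [hh, if_pos rfl, ite_true]
    exact aux_exp_moment2 hr ht.le
  have hj : ∀ j ∈ Finset.univ.erase i,
      ∫⁻ y, ENNReal.ofReal (h j y) ∂expMeasure r = ENNReal.ofReal (r / (r + t)) := by
    intro j hj
    have hne : j ≠ i := (Finset.mem_erase.mp hj).1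
    simp only [hh, if_neg hne, ite_false, one_mul]
    exact aux_exp_moment0 hr ht.le
  rw [hi, Finset.prod_congr rfl hj, Finset.prod_const,
    Finset.card_erase_of_mem (Finset.mem_univ i), Finset.card_univ, Fintype.card_fin]
  rw [ENNReal.ofReal_mul (by positivity), ENNReal.ofReal_mul ht.le,
    ENNReal.ofReal_pow (by positivity), mul_assoc]

lemma aux_exp_Iic_zero {r : ℝ} : expMeasure r (Iic 0) = 0 := by
  have h1 : expMeasure r (Iio 0) = 0 := by
    rw [expMeasure, gammaMeasure, withDensity_apply _ measurableSet_Iio]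
    exact lintegral_gammaPDF_of_nonpos le_rfl
  have h2 : expMeasure r {(0:ℝ)} = 0 := by
    rw [expMeasure, gammaMeasure, withDensity_apply _ (measurableSet_singleton 0)]
    exact setLIntegral_measure_zero _ _ (measure_singleton 0)
  have : Iic (0:ℝ) = Iio 0 ∪ {0} := by
    ext y; simp [le_iff_lt_or_eq]
  rw [this]
  exact le_antisymm (le_trans (measure_union_le _ _) (by rw [h1, h2]; simp)) zero_le

lemma aux_ae_pos {r : ℝ} (hr : 0 < r) {n : ℕ} :
    ∀ᵐ x ∂(Measure.pi fun _ : Fin n => expMeasure r), ∀ j, 0 < x j := by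
  haveI : IsProbabilityMeasure (expMeasure r) := isProbabilityMeasure_gammaMeasure zero_lt_one hr
  rw [ae_all_iff]
  intro j
  rw [ae_iff]
  have hset : {x : Fin n → ℝ | ¬ 0 < x j} = (fun x : Fin n → ℝ => x j) ⁻¹' (Iic 0) := by
    ext x; simp [not_lt]
  rw [hset, Set.eval_preimage, Measure.pi_pi]
  apply Finset.prod_eq_zero (Finset.mem_univ j)
  simp [Function.update_self, aux_exp_Iic_zero]

lemma aux_Ai {r : ℝ} (hr : 0 < r) {n : ℕ} (hn : 1 ≤ n) (i : Fin n) :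
    ∫⁻ x : Fin n → ℝ, ENNReal.ofReal ((x i) ^ 2 / (∑ j, x j) ^ 2)
      ∂(Measure.pi fun _ : Fin n => expMeasure r)
    = ENNReal.ofReal (2 / (n * (n + 1))) := by
  haveI : IsProbabilityMeasure (expMeasure r) := isProbabilityMeasure_gammaMeasure zero_lt_one hr
  haveI : Nonempty (Fin n) := ⟨⟨0, hn⟩⟩
  set ν := Measure.pi fun _ : Fin n => expMeasure r with hν
  -- step 1: replace integrand by double integral, a.e.
  have hae : ∀ᵐ x ∂ν, ENNReal.ofReal ((x i) ^ 2 / (∑ j, x j) ^ 2)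
      = ∫⁻ t in Ioi (0:ℝ), ENNReal.ofReal ((x i) ^ 2 * (t * exp (-((∑ j, x j) * t)))) := by
    filter_upwards [aux_ae_pos hr] with x hx
    have hS : 0 < ∑ j, x j := Finset.sum_pos (fun j _ => hx j) Finset.univ_nonempty
    have hc : (0:ℝ) ≤ (x i) ^ 2 := sq_nonneg _
    calc ENNReal.ofReal ((x i) ^ 2 / (∑ j, x j) ^ 2)
        = ENNReal.ofReal ((x i) ^ 2) * ENNReal.ofReal ((∑ j, x j)⁻¹ ^ 2) := by
          rw [← ENNReal.ofReal_mul hc]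
          congr 1
          field_simp
      _ = ENNReal.ofReal ((x i) ^ 2) * ∫⁻ t in Ioi (0:ℝ),
            ENNReal.ofReal (t * exp (-((∑ j, x j) * t))) := by rw [aux_laplace hS]
      _ = ∫⁻ t in Ioi (0:ℝ), ENNReal.ofReal ((x i) ^ 2 * (t * exp (-((∑ j, x j) * t)))) := by
          rw [← lintegral_const_mul' _ _ ENNReal.ofReal_ne_top]
          refine lintegral_congr fun t => ?_
          rw [← ENNReal.ofReal_mul hc]
  rw [lintegral_congr_ae hae]
  -- step 2: swap
  have hmeasH : Measurable (fun p : (Fin n → ℝ) × ℝ =>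
      ENNReal.ofReal ((p.1 i) ^ 2 * (p.2 * exp (-((∑ j, p.1 j) * p.2))))) := by
    have hsum : Measurable fun p : (Fin n → ℝ) × ℝ => ∑ j, p.1 j :=
      Finset.measurable_sum _ fun j _ => (measurable_pi_apply j).comp measurable_fst
    fun_prop
  rw [lintegral_lintegral_swap hmeasH.aemeasurable]
  -- step 3: inner integral via aux_inner
  rw [setLIntegral_congr_fun measurableSet_Ioi
    (fun t (ht : t ∈ Ioi (0:ℝ)) => aux_inner hr ht i)]
  -- step 4: simplify integrand to 2 r^n * (t * (r+t)^(-(n:ℤ)-2))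
  obtain ⟨m, rfl⟩ : ∃ m, n = m + 1 := ⟨n - 1, (Nat.succ_pred_eq_of_pos hn).symm⟩
  have hptw : ∀ t ∈ Ioi (0:ℝ), ENNReal.ofReal (t * (2 * r / (r + t) ^ 3) *
        (r / (r + t)) ^ (m + 1 - 1))
      = ENNReal.ofReal (2 * r ^ (m + 1)) *
          ENNReal.ofReal (t * (r + t) ^ (-((m + 1 : ℕ) : ℤ) - 2)) := by
    intro t ht
    have ht0 : (0:ℝ) < t := ht
    have hrt : (0:ℝ) < r + t := by linarith
    rw [← ENNReal.ofReal_mul (by positivity)]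
    congr 1
    have hz : (r + t) ^ (-((m + 1 : ℕ) : ℤ) - 2) = ((r + t) ^ (m + 3 : ℕ))⁻¹ := by
      rw [show (-((m + 1 : ℕ) : ℤ) - 2) = -((m : ℤ) + 3) by push_cast; ring, zpow_neg,
        ← zpow_natCast (r + t)]
      push_cast
      ring_nf
    rw [hz]
    simp only [Nat.add_sub_cancel]
    rw [div_pow]
    field_simp
    ring
  rw [setLIntegral_congr_fun measurableSet_Ioi hptw]
  rw [lintegral_const_mul' _ _ ENNReal.ofReal_ne_top]
  rw [aux_tint hr (by omega : 1 ≤ m + 1)]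
  rw [← ENNReal.ofReal_mul (by positivity)]
  congr 1
  have hrn : r ^ (m + 1) ≠ 0 := by positivity
  have h1 : r ^ (-((m:ℤ) + 1)) = (r ^ (m + 1 : ℕ))⁻¹ := by
    rw [show (-((m:ℤ) + 1)) = -((m : ℤ) + 1) by ring, zpow_neg, ← zpow_natCast r]
    push_cast
    ring_nf
  push_cast
  rw [show (-(((m:ℕ):ℤ) + 1)) = -((m + 1 : ℕ) : ℤ) by push_cast; ring] at h1 ⊢
  rw [h1]
  field_simp

/-- For i.i.d. exponential random variables with mean `lam > 0`, the variance ratio test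
statistic `D = ∑ i, (X i - X̄)² / X̄²` satisfies `E[D] = n(n - 1)/(n + 1)`; in
particular `E[D]` does not depend on `lam`. -/
theorem expectation_variance_ratio_stat_of_iid_exponential
    {Ω : Type*} [MeasurableSpace Ω] (P : Measure Ω) [IsProbabilityMeasure P]
    (n : ℕ) (hn : 1 ≤ n) (lam : ℝ) (hlam : 0 < lam)
    (X : Fin n → Ω → ℝ) (hmeas : ∀ i, Measurable (X i))
    (hindep : iIndepFun X P)
    (hdist : ∀ i, Measure.map (X i) P = expMeasure lam⁻¹) :
    ∫ ω, (∑ i, (X i ω - (∑ j, X j ω) / n) ^ 2) / ((∑ j, X j ω) / n) ^ 2 ∂P =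
      (n : ℝ) * ((n : ℝ) - 1) / ((n : ℝ) + 1) := by
  have hr : 0 < lam⁻¹ := inv_pos.mpr hlam
  set r : ℝ := lam⁻¹ with hrdef
  haveI : IsProbabilityMeasure (expMeasure r) := isProbabilityMeasure_gammaMeasure zero_lt_one hr
  haveI : Nonempty (Fin n) := ⟨⟨0, hn⟩⟩
  have hn0 : (n:ℝ) ≠ 0 := Nat.cast_ne_zero.mpr (by omega)
  have hn1 : (n:ℝ) + 1 ≠ 0 := by positivity
  set ν : Measure (Fin n → ℝ) := Measure.pi fun _ : Fin n => expMeasure r with hν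
  have hmap : Measure.map (fun ω i => X i ω) P = ν := aux_joint_eq_pi P X hmeas hindep hdist
  set f : (Fin n → ℝ) → ℝ :=
    fun x => (∑ i, (x i - (∑ j, x j) / n) ^ 2) / ((∑ j, x j) / n) ^ 2 with hfdef
  have hsummeas : Measurable fun x : Fin n → ℝ => ∑ j, x j :=
    Finset.measurable_sum _ fun j _ => measurable_pi_apply j
  have hfmeas : Measurable f := by
    apply Measurable.div
    · exact Finset.measurable_sum _ fun i _ => by fun_prop
    · fun_prop
  have hstep1 : ∫ ω, (∑ i, (X i ω - (∑ j, X j ω) / n) ^ 2) / ((∑ j, X j ω) / n) ^ 2 ∂P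
      = ∫ x, f x ∂ν := by
    rw [← hmap]
    exact (integral_map (measurable_pi_lambda _ hmeas).aemeasurable
      hfmeas.aestronglyMeasurable).symm
  rw [hstep1]
  set g : (Fin n → ℝ) → ℝ := fun x => (∑ i, (x i) ^ 2) / (∑ j, x j) ^ 2 with hgdef
  have hgmeas : Measurable g := by
    apply Measurable.div
    · exact Finset.measurable_sum _ fun i _ => by fun_prop
    · fun_prop
  have hfg : ∀ᵐ x ∂ν, f x = (n:ℝ) ^ 2 * g x - n := by
    filter_upwards [aux_ae_pos hr] with x hx
    have hS : 0 < ∑ j, x j := Finset.sum_pos (fun j _ => hx j) Finset.univ_nonempty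
    have hSne : (∑ j, x j) ≠ 0 := ne_of_gt hS
    have hexp : ∑ i, (x i - (∑ j, x j) / n) ^ 2
        = (∑ i, (x i) ^ 2) - (∑ j, x j) ^ 2 / n := by
      have hterm : ∀ i : Fin n, (x i - (∑ j, x j) / n) ^ 2
          = (x i) ^ 2 - (2 * (∑ j, x j) / n) * x i + ((∑ j, x j) / n) ^ 2 := fun i => by ring
      rw [Finset.sum_congr rfl fun i _ => hterm i, Finset.sum_add_distrib,
        Finset.sum_sub_distrib, ← Finset.mul_sum, Finset.sum_const, Finset.card_univ,
        Fintype.card_fin, nsmul_eq_mul]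
      field_simp
      ring
    simp only [hfdef, hgdef, hexp]
    field_simp
  have hgnn : 0 ≤ᵐ[ν] g := ae_of_all _ fun x => by
    simp only [hgdef]; positivity
  have hgbound : ∀ᵐ x ∂ν, ‖g x‖ ≤ 1 := by
    filter_upwards [aux_ae_pos hr] with x hx
    have h1 : (∑ i, (x i) ^ 2) ≤ (∑ j, x j) ^ 2 :=
      Finset.sum_sq_le_sq_sum_of_nonneg fun i _ => (hx i).le
    have hS : 0 < ∑ j, x j := Finset.sum_pos (fun j _ => hx j) Finset.univ_nonempty
    have h0 : 0 ≤ g x := by simp only [hgdef]; positivity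
    rw [Real.norm_eq_abs, abs_of_nonneg h0]
    simp only [hgdef]
    rw [div_le_one (by positivity)]
    exact h1
  have hgint : Integrable g ν :=
    Integrable.mono' (integrable_const 1) hgmeas.aestronglyMeasurable hgbound
  have hgval : ∫ x, g x ∂ν = 2 / ((n:ℝ) + 1) := by
    have hofReal := ofReal_integral_eq_lintegral_ofReal hgint hgnn
    have hsplit : ∀ x : Fin n → ℝ, ENNReal.ofReal (g x)
        = ∑ i, ENNReal.ofReal ((x i) ^ 2 / (∑ j, x j) ^ 2) := by
      intro x
      rw [hgdef]
      simp only
      rw [Finset.sum_div]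
      exact ENNReal.ofReal_sum_of_nonneg fun i _ => by positivity
    have hlin : ∫⁻ x, ENNReal.ofReal (g x) ∂ν = ENNReal.ofReal (2 / ((n:ℝ) + 1)) := by
      rw [lintegral_congr hsplit,
        lintegral_finset_sum _ fun i _ => by fun_prop]
      have : ∀ i : Fin n, (∫⁻ x : Fin n → ℝ, ENNReal.ofReal ((x i) ^ 2 / (∑ j, x j) ^ 2) ∂ν)
          = ENNReal.ofReal (2 / ((n:ℝ) * ((n:ℝ) + 1))) := fun i => aux_Ai hr hn i
      rw [Finset.sum_congr rfl fun i _ => this i, Finset.sum_const, Finset.card_univ,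
        Fintype.card_fin, nsmul_eq_mul]
      rw [show ((n:ℝ≥0∞)) = ENNReal.ofReal ((n:ℝ)) by simp, ← ENNReal.ofReal_mul (by positivity)]
      congr 1
      field_simp
    rw [hlin] at hofReal
    have h2 : 0 ≤ ∫ x, g x ∂ν := integral_nonneg_of_ae hgnn
    exact (ENNReal.ofReal_eq_ofReal_iff h2 (by positivity)).mp hofReal
  rw [integral_congr_ae hfg, integral_sub (hgint.const_mul _) (integrable_const _),
    integral_const_mul, integral_const, hgval]
  simp only [measure_univ, probReal_univ, ENNReal.toReal_one, smul_eq_mul, one_mul]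
  field_simp
  ring
end

section
/- Exponential case. Let X be an exponential random variable with mean λ > 0, so μ = λ and σ² = λ², and let μ₃ = E[(X − λ)³] and μ₄ = E[(X − λ)⁴]. Then, taking f(x) = x² (so f(μ) = λ² and f′(μ) = 2λ), the asymptotic-variance expression of the variance ratio test satisfies (σ⁶ f′(μ)² − 2 f(μ) σ² μ₃ f′(μ) + f(μ)² (μ₄ − σ⁴)) / f(μ)⁴ = 4; in particular it is not equal to 2. -/
open MeasureTheory ProbabilityTheory Filter

open Real Set
open scoped ENNReal NNReal

lemma exp_integral_eq (r : ℝ) (hr : 0 < r) (g : ℝ → ℝ) :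
    ∫ x, g x ∂(expMeasure r) = ∫ x in Ioi (0:ℝ), g x * (r * Real.exp (-(r * x))) := by
  have hmeas : Measurable fun x => (exponentialPDFReal r x).toNNReal :=
    (measurable_exponentialPDFReal r).real_toNNReal
  have hpdf : gammaPDF 1 r = fun x => ((exponentialPDFReal r x).toNNReal : ℝ≥0∞) := by
    funext x
    rfl
  rw [expMeasure, gammaMeasure, hpdf, integral_withDensity_eq_integral_smul hmeas]
  have : ∀ x : ℝ, (exponentialPDFReal r x).toNNReal • g x
      = Set.indicator (Ici (0:ℝ)) (fun x => g x * (r * Real.exp (-(r * x)))) x := by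
    intro x
    rw [NNReal.smul_def, Real.coe_toNNReal _ (exponentialPDFReal_nonneg hr x)]
    rw [exponentialPDFReal, gammaPDFReal]
    by_cases hx : (0:ℝ) ≤ x
    · simp only [hx, if_true, Real.rpow_one, Real.Gamma_one, div_one, sub_self,
        Real.rpow_zero, mul_one, indicator_of_mem (mem_Ici.mpr hx), smul_eq_mul]
      ring
    · simp [hx, indicator_of_notMem (by simpa using hx : x ∉ Ici (0:ℝ))]
  simp_rw [this]
  rw [integral_indicator measurableSet_Ici, integral_Ici_eq_integral_Ioi]

lemma exp_mom_integrable (r : ℝ) (hr : 0 < r) (n : ℕ) :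
    IntegrableOn (fun x => x ^ n * (r * Real.exp (-(r * x)))) (Ioi (0:ℝ)) := by
  have h : IntegrableOn (fun x => r * (x ^ ((n:ℝ)) * Real.exp (-r * x ^ (1:ℝ)))) (Ioi (0:ℝ)) :=
    (integrableOn_rpow_mul_exp_neg_mul_rpow (s := (n:ℝ)) (p := 1)
      (by exact_mod_cast neg_one_lt_zero.trans_le (Nat.cast_nonneg n)) one_pos hr).const_mul r
  refine h.congr_fun (fun x _ => ?_) measurableSet_Ioi
  simp only [Real.rpow_natCast, Real.rpow_one, neg_mul]
  ring

lemma exp_mom_val (r : ℝ) (hr : 0 < r) (n : ℕ) :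
    ∫ x in Ioi (0:ℝ), x ^ n * (r * Real.exp (-(r * x))) = n.factorial / r ^ n := by
  have h := Real.integral_rpow_mul_exp_neg_mul_Ioi (a := (n:ℝ) + 1) (by positivity) hr
  rw [add_sub_cancel_right] at h
  have h2 : ∫ x in Ioi (0:ℝ), x ^ n * (r * Real.exp (-(r * x)))
      = r * ∫ t in Ioi (0:ℝ), t ^ ((n:ℝ)) * Real.exp (-(r * t)) := by
    rw [← integral_const_mul]
    refine setIntegral_congr_fun measurableSet_Ioi (fun x _ => ?_)
    rw [Real.rpow_natCast]; ring
  rw [h2, h, show ((n:ℝ) + 1) = ((n + 1 : ℕ) : ℝ) by push_cast; ring,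
    Real.rpow_natCast, Nat.cast_add, Nat.cast_one, Real.Gamma_nat_eq_factorial]
  field_simp
  rw [one_div_pow, pow_succ, mul_one_div, div_mul_eq_mul_div, div_eq_one_iff_eq (by positivity)]
  ring

lemma exp_central_mom (lam : ℝ) (hlam : 0 < lam) {Ω : Type*} [MeasurableSpace Ω]
    (P : Measure Ω) (X : Ω → ℝ) (hX : Measurable X)
    (hdist : Measure.map X P = expMeasure lam⁻¹) (k : ℕ) :
    ∫ ω, (X ω - lam) ^ k ∂P
      = ∫ x in Ioi (0:ℝ), (x - lam) ^ k * (lam⁻¹ * Real.exp (-(lam⁻¹ * x))) := by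
  have : ∫ ω, (X ω - lam) ^ k ∂P = ∫ x, (x - lam) ^ k ∂(Measure.map X P) :=
    (integral_map hX.aemeasurable ((measurable_id.sub_const lam).pow_const k).aestronglyMeasurable).symm
  rw [this, hdist, exp_integral_eq lam⁻¹ (by positivity)]

lemma exp_cmom3 (r : ℝ) (hr : 0 < r) (lam : ℝ) :
    ∫ x in Ioi (0:ℝ), (x - lam) ^ 3 * (r * Real.exp (-(r * x)))
      = 6 / r ^ 3 - 3 * lam * (2 / r ^ 2) + 3 * lam ^ 2 * (1 / r) - lam ^ 3 := by
  have I0 := exp_mom_integrable r hr 0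
  have I1 := exp_mom_integrable r hr 1
  have I2 := exp_mom_integrable r hr 2
  have I3 := exp_mom_integrable r hr 3
  have e : (fun x : ℝ => (x - lam) ^ 3 * (r * Real.exp (-(r * x))))
      = fun x => x ^ 3 * (r * Real.exp (-(r * x)))
          + (-(3 * lam)) * (x ^ 2 * (r * Real.exp (-(r * x))))
          + (3 * lam ^ 2) * (x ^ 1 * (r * Real.exp (-(r * x))))
          + (-(lam ^ 3)) * (x ^ 0 * (r * Real.exp (-(r * x)))) := by
    funext x; ring
  have A : Integrable (fun x : ℝ => x ^ 3 * (r * Real.exp (-(r * x)))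
      + (-(3 * lam)) * (x ^ 2 * (r * Real.exp (-(r * x))))) (volume.restrict (Ioi 0)) :=
    I3.add (I2.const_mul _)
  have B : Integrable (fun x : ℝ => x ^ 3 * (r * Real.exp (-(r * x)))
      + (-(3 * lam)) * (x ^ 2 * (r * Real.exp (-(r * x))))
      + (3 * lam ^ 2) * (x ^ 1 * (r * Real.exp (-(r * x))))) (volume.restrict (Ioi 0)) :=
    A.add (I1.const_mul _)
  rw [e, integral_add B (I0.const_mul _), integral_add A (I1.const_mul _),
    integral_add I3 (I2.const_mul _), integral_const_mul, integral_const_mul,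
    integral_const_mul, exp_mom_val r hr 0, exp_mom_val r hr 1, exp_mom_val r hr 2,
    exp_mom_val r hr 3]
  norm_num [Nat.factorial]
  ring

lemma exp_cmom4 (r : ℝ) (hr : 0 < r) (lam : ℝ) :
    ∫ x in Ioi (0:ℝ), (x - lam) ^ 4 * (r * Real.exp (-(r * x)))
      = 24 / r ^ 4 - 4 * lam * (6 / r ^ 3) + 6 * lam ^ 2 * (2 / r ^ 2)
          - 4 * lam ^ 3 * (1 / r) + lam ^ 4 := by
  have I0 := exp_mom_integrable r hr 0
  have I1 := exp_mom_integrable r hr 1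
  have I2 := exp_mom_integrable r hr 2
  have I3 := exp_mom_integrable r hr 3
  have I4 := exp_mom_integrable r hr 4
  have e : (fun x : ℝ => (x - lam) ^ 4 * (r * Real.exp (-(r * x))))
      = fun x => x ^ 4 * (r * Real.exp (-(r * x)))
          + (-(4 * lam)) * (x ^ 3 * (r * Real.exp (-(r * x))))
          + (6 * lam ^ 2) * (x ^ 2 * (r * Real.exp (-(r * x))))
          + (-(4 * lam ^ 3)) * (x ^ 1 * (r * Real.exp (-(r * x))))
          + (lam ^ 4) * (x ^ 0 * (r * Real.exp (-(r * x)))) := by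
    funext x; ring
  have A : Integrable (fun x : ℝ => x ^ 4 * (r * Real.exp (-(r * x)))
      + (-(4 * lam)) * (x ^ 3 * (r * Real.exp (-(r * x))))) (volume.restrict (Ioi 0)) :=
    I4.add (I3.const_mul _)
  have B : Integrable (fun x : ℝ => x ^ 4 * (r * Real.exp (-(r * x)))
      + (-(4 * lam)) * (x ^ 3 * (r * Real.exp (-(r * x))))
      + (6 * lam ^ 2) * (x ^ 2 * (r * Real.exp (-(r * x))))) (volume.restrict (Ioi 0)) :=
    A.add (I2.const_mul _)
  have C : Integrable (fun x : ℝ => x ^ 4 * (r * Real.exp (-(r * x)))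
      + (-(4 * lam)) * (x ^ 3 * (r * Real.exp (-(r * x))))
      + (6 * lam ^ 2) * (x ^ 2 * (r * Real.exp (-(r * x))))
      + (-(4 * lam ^ 3)) * (x ^ 1 * (r * Real.exp (-(r * x))))) (volume.restrict (Ioi 0)) :=
    B.add (I1.const_mul _)
  rw [e, integral_add C (I0.const_mul _), integral_add B (I1.const_mul _),
    integral_add A (I2.const_mul _),
    integral_add I4 (I3.const_mul _), integral_const_mul, integral_const_mul,
    integral_const_mul, integral_const_mul, exp_mom_val r hr 0, exp_mom_val r hr 1,
    exp_mom_val r hr 2, exp_mom_val r hr 3, exp_mom_val r hr 4]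
  norm_num [Nat.factorial]
  ring

/-- Exponential case. For an exponential random variable with mean `lam > 0` (so
`μ = lam`, `σ² = lam²`), taking `f x = x²` (so `f μ = lam²` and `f′(μ) = 2 lam`), the
asymptotic-variance expression of the variance ratio test,
`(σ⁶ f′(μ)² - 2 f(μ) σ² μ₃ f′(μ) + f(μ)² (μ₄ - σ⁴)) / f(μ)⁴`, equals `4`; in particular
it is not equal to `2`. -/
theorem variance_ratio_asymptotic_variance_exponential
    {Ω : Type*} [MeasurableSpace Ω] (P : Measure Ω) [IsProbabilityMeasure P]
    (lam : ℝ) (hlam : 0 < lam)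
    (X : Ω → ℝ) (hX : Measurable X)
    (hdist : Measure.map X P = expMeasure lam⁻¹)
    (μ3 μ4 : ℝ)
    (hμ3 : μ3 = ∫ ω, (X ω - lam) ^ 3 ∂P)
    (hμ4 : μ4 = ∫ ω, (X ω - lam) ^ 4 ∂P)
    (f : ℝ → ℝ) (hf : f = fun x => x ^ 2) :
    (lam ^ 6 * (deriv f lam) ^ 2 - 2 * f lam * lam ^ 2 * μ3 * deriv f lam
        + (f lam) ^ 2 * (μ4 - lam ^ 4)) / (f lam) ^ 4 = 4 ∧
      (lam ^ 6 * (deriv f lam) ^ 2 - 2 * f lam * lam ^ 2 * μ3 * deriv f lam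
        + (f lam) ^ 2 * (μ4 - lam ^ 4)) / (f lam) ^ 4 ≠ 2 := by
  have hr : (0:ℝ) < lam⁻¹ := by positivity
  have h3 : μ3 = 2 * lam ^ 3 := by
    rw [hμ3, exp_central_mom lam hlam P X hX hdist 3, exp_cmom3 _ hr]
    field_simp
    ring
  have h4 : μ4 = 9 * lam ^ 4 := by
    rw [hμ4, exp_central_mom lam hlam P X hX hdist 4, exp_cmom4 _ hr]
    field_simp
    ring
  subst hf
  have hd : deriv (fun x : ℝ => x ^ 2) lam = 2 * lam := by simp
  have key : (lam ^ 6 * (deriv (fun x : ℝ => x ^ 2) lam) ^ 2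
      - 2 * (fun x : ℝ => x ^ 2) lam * lam ^ 2 * μ3 * deriv (fun x : ℝ => x ^ 2) lam
      + ((fun x : ℝ => x ^ 2) lam) ^ 2 * (μ4 - lam ^ 4)) / ((fun x : ℝ => x ^ 2) lam) ^ 4
      = 4 := by
    simp only [hd, h3, h4]
    rw [div_eq_iff (by positivity)]
    ring
  exact ⟨key, by rw [key]; norm_num⟩
end
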